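/- arXiv:2409.03113 — 2 statements merged into one kernel-verified Lean document; each statement's English description precedes it below -/
import Mathlib

section
/- There is an algorithm which, on input an index for a connected highly computable graph G and a finite set E of edges of G, halts if and only if E ∉ Sep(G); that is, membership in Sep(G), uniformly in a description of G, is a Π⁰₁ problem. -/
/-! ## Oracle computability via oracle machine codes -/

/-- Codes for oracle (Turing) machines: partial recursive operations relative to an oracle. -/
inductive OCode : Type
  | zero
  | succ
  | left
  | right
  | oracle
  | pair (a b : OCode)
  | comp (a b : OCode)
  | prec (a b : OCode)
  | rfind (a : OCode)

/-- Evaluation of an oracle machine code relative to the oracle `O`. -/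
def OCode.eval (O : ℕ →. ℕ) : OCode → ℕ →. ℕ
  | .zero => fun _ => Part.some 0
  | .succ => fun n => Part.some (n + 1)
  | .left => fun n => Part.some n.unpair.1
  | .right => fun n => Part.some n.unpair.2
  | .oracle => O
  | .pair a b => fun n => Nat.pair <$> a.eval O n <*> b.eval O n
  | .comp a b => fun n => b.eval O n >>= a.eval O
  | .prec a b =>
      Nat.unpaired fun x y =>
        Nat.rec (motive := fun _ => Part ℕ) (a.eval O x)
          (fun i IH => IH.bind fun r => b.eval O (Nat.pair x (Nat.pair i r))) y
  | .rfind a => fun n =>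
      Nat.rfind fun m => (a.eval O (Nat.pair n m)).map fun r => decide (r = 0)

/-- `f` is partial recursive relative to the oracle `O`. -/
def RecIn (O f : ℕ →. ℕ) : Prop := ∃ c : OCode, c.eval O = f

/-- Characteristic (partial, total-valued) function of a set of naturals. -/
noncomputable def chi (A : Set ℕ) : ℕ →. ℕ := fun n => Part.some (A.indicator (fun _ => 1) n)

/-- Turing reducibility between sets of naturals: `A ≤_T B`. -/
def TuringLE (A B : Set ℕ) : Prop := RecIn (chi B) (chi A)

/-- Evaluation of the `e`-th partial computable function. -/
def evalIdx (e : ℕ) : ℕ →. ℕ := (Denumerable.ofNat Nat.Partrec.Code e).eval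

/-- The halting set `∅'`. -/
def K₀ : Set ℕ := {e | (evalIdx e e).Dom}

/-- A (numerical) encoding of oracle machine codes. -/
def OCode.encodeC : OCode → ℕ
  | .zero => 0
  | .succ => 1
  | .left => 2
  | .right => 3
  | .oracle => 4
  | .pair a b => 4 * Nat.pair a.encodeC b.encodeC + 5
  | .comp a b => 4 * Nat.pair a.encodeC b.encodeC + 6
  | .prec a b => 4 * Nat.pair a.encodeC b.encodeC + 7
  | .rfind a => 4 * Nat.pair a.encodeC a.encodeC + 8

/-- The Turing jump of a set of naturals. -/
noncomputable def jump (A : Set ℕ) : Set ℕ :=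
  {n | ∃ c : OCode, c.encodeC = n.unpair.1 ∧ (c.eval (chi A) n.unpair.2).Dom}

/-! ## Arithmetical hierarchy notions -/

/-- Computably enumerable set of naturals. -/
def CE (A : Set ℕ) : Prop := ∃ f : ℕ →. ℕ, Partrec f ∧ ∀ n, n ∈ A ↔ (f n).Dom

/-- `Π⁰₁` sets: complements of c.e. sets. -/
def Pi1 (A : Set ℕ) : Prop := CE Aᶜ

/-- `Π⁰₁`-complete sets. -/
def Pi1Complete (A : Set ℕ) : Prop :=
  Pi1 A ∧ ∀ B : Set ℕ, Pi1 B → ManyOneReducible (· ∈ B) (· ∈ A)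

/-- `Σ⁰₂` sets. -/
def Sigma2 {α : Type} [Primcodable α] (A : Set α) : Prop :=
  ∃ R : α → ℕ → ℕ → Bool,
    Computable (fun x : α × ℕ × ℕ => R x.1 x.2.1 x.2.2) ∧
    ∀ x, x ∈ A ↔ ∃ y, ∀ z, R x y z = true

/-- `Π⁰₂` sets: complements of `Σ⁰₂` sets. -/
def Pi2 {α : Type} [Primcodable α] (A : Set α) : Prop := Sigma2 Aᶜ

/-- `Π⁰₂`-complete sets of naturals. -/
def Pi2Complete (A : Set ℕ) : Prop :=
  Pi2 A ∧ ∀ B : Set ℕ, Pi2 B → ManyOneReducible (· ∈ B) (· ∈ A)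

/-- `Σ₂⁻¹` (2-c.e., d.c.e.) sets: differences of two c.e. sets. -/
def TwoCE (A : Set ℕ) : Prop := ∃ B C : Set ℕ, CE B ∧ CE C ∧ A = B \ C

/-- `Σ₂⁻¹`-complete sets. -/
def TwoCEComplete (A : Set ℕ) : Prop :=
  TwoCE A ∧ ∀ B : Set ℕ, TwoCE B → ManyOneReducible (· ∈ B) (· ∈ A)

/-- The image of a set under the canonical encoding into `ℕ`. -/
def encodeSet {α : Type} [Encodable α] (A : Set α) : Set ℕ :=
  {n | ∃ a ∈ A, Encodable.encode a = n}

/-! ## Computable graphs on `ℕ` -/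

/-- A (simple, undirected) graph with vertex set a subset of `ℕ`, described by Boolean-valued
vertex and adjacency functions. -/
structure CGraph where
  verts : ℕ → Bool
  adj : ℕ → ℕ → Bool
  symm : ∀ u v, adj u v = adj v u
  loopless : ∀ v, adj v v = false
  adj_verts : ∀ u v, adj u v = true → verts u = true ∧ verts v = true

namespace CGraph

/-- The underlying simple graph on `ℕ` (non-vertices are isolated). -/
def toSimpleGraph (G : CGraph) : SimpleGraph ℕ where
  Adj u v := G.adj u v = true
  symm := ⟨fun u v h => (G.symm v u).trans h⟩
  loopless := ⟨fun v h => by simp [G.loopless v] at h⟩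

def vertexSet (G : CGraph) : Set ℕ := {v | G.verts v = true}

def neighborSet (G : CGraph) (v : ℕ) : Set ℕ := {u | G.adj v u = true}

/-- Degree of a vertex. -/
noncomputable def degree (G : CGraph) (v : ℕ) : ℕ := (G.neighborSet v).ncard

/-- The graph obtained by deleting a finite set of (unordered) edges, given as a list of pairs. -/
def deleteEdges (G : CGraph) (E : List (ℕ × ℕ)) : SimpleGraph ℕ where
  Adj u v := G.adj u v = true ∧ (u, v) ∉ E ∧ (v, u) ∉ E
  symm := ⟨fun u v h => ⟨(G.symm v u).trans h.1, h.2.2, h.2.1⟩⟩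
  loopless := ⟨fun v h => by simp [G.loopless v] at h⟩

/-- `Comp_G(E)`: the number of infinite connected components of `G ∖ E`. -/
noncomputable def comp (G : CGraph) (E : List (ℕ × ℕ)) : ℕ :=
  {C : (G.deleteEdges E).ConnectedComponent | C.supp.Infinite}.ncard

/-- The number of ends of `G`: the supremum over finite edge sets `E` of `Comp_G(E)`. -/
noncomputable def numEnds (G : CGraph) : ℕ∞ :=
  ⨆ E : List (ℕ × ℕ), (G.comp E : ℕ∞)

/-- `Sep(G)`: finite edge sets separating `G` into at least two infinite components. -/
def Sep (G : CGraph) : Set (List (ℕ × ℕ)) := {E | 2 ≤ G.comp E}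

/-- `SepMax(G)`: finite edge sets realizing the number of ends of `G`. -/
def SepMax (G : CGraph) : Set (List (ℕ × ℕ)) := {E | (G.comp E : ℕ∞) = G.numEnds}

/-- Connectedness (of the subgraph induced on the vertex set). -/
def Connected (G : CGraph) : Prop :=
  (∃ v, G.verts v = true) ∧
    ∀ u v, G.verts u = true → G.verts v = true → G.toSimpleGraph.Reachable u v

/-- A highly computable graph: computable vertex set and adjacency, locally finite,
with computable degree function. -/
def HighlyComputable (G : CGraph) : Prop :=
  Computable G.verts ∧ Computable₂ G.adj ∧
    (∀ v, (G.neighborSet v).Finite) ∧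
    ∃ d : ℕ → ℕ, Computable d ∧ ∀ v, G.degree v = d v

/-- `e` is an index (program) for the highly computable graph `G`: the `e`-th partial computable
function answers vertex membership, adjacency, and degree queries about `G`. -/
def IndexOf (e : ℕ) (G : CGraph) : Prop :=
  (∀ v, evalIdx e (Nat.pair 0 v) = Part.some (G.verts v).toNat) ∧
  (∀ u v, evalIdx e (Nat.pair 1 (Nat.pair u v)) = Part.some (G.adj u v).toNat) ∧
  (∀ v, evalIdx e (Nat.pair 2 v) = Part.some (G.degree v))

/-- The canonical description (oracle) of a highly computable graph. -/
noncomputable def descr (G : CGraph) : ℕ →. ℕ := fun n =>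
  Part.some <|
    if n.unpair.1 = 0 then (G.verts n.unpair.2).toNat
    else if n.unpair.1 = 1 then (G.adj n.unpair.2.unpair.1 n.unpair.2.unpair.2).toNat
    else G.degree n.unpair.2

/-- The join of the description of `G` with (the characteristic function of) a set `A`. -/
noncomputable def oracleWith (G : CGraph) (A : Set ℕ) : ℕ →. ℕ := fun n =>
  if n.unpair.1 = 0 then G.descr n.unpair.2 else chi A n.unpair.2

/-- A finite simple path in `G`, as a list of vertices. -/
def IsPath (G : CGraph) (l : List ℕ) : Prop :=
  l ≠ [] ∧ (∀ v ∈ l, G.verts v = true) ∧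
    l.Chain' (fun u v => G.adj u v = true) ∧ l.Nodup

/-- A one-way infinite simple path in `G`. -/
def InfPath (G : CGraph) (p : ℕ → ℕ) : Prop :=
  (∀ n, G.adj (p n) (p (n + 1)) = true) ∧ Function.Injective p

/-- The infinite sequence `p` extends the finite list `l` (as an initial segment). -/
def Extends (p : ℕ → ℕ) (l : List ℕ) : Prop :=
  ∀ i (h : i < l.length), p i = l.get ⟨i, h⟩

/-- `Path(G)`: finite simple paths extendable to one-way infinite simple paths. -/
def PathSet (G : CGraph) : Set (List ℕ) :=
  {l | G.IsPath l ∧ ∃ p : ℕ → ℕ, G.InfPath p ∧ Extends p l}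

/-- A one-way infinite geodesic path in `G`. -/
def InfGeodesic (G : CGraph) (p : ℕ → ℕ) : Prop :=
  (∀ n, G.adj (p n) (p (n + 1)) = true) ∧
    ∀ m n : ℕ, m ≤ n → G.toSimpleGraph.dist (p m) (p n) = n - m

/-- A one-way infinite Eulerian path in the simple graph `G`: every edge traversed exactly once. -/
def OneWayEulerian (G : CGraph) (p : ℕ → ℕ) : Prop :=
  (∀ n, G.adj (p n) (p (n + 1)) = true) ∧
    ∀ u v, G.adj u v = true →
      {n : ℕ | (p n = u ∧ p (n + 1) = v) ∨ (p n = v ∧ p (n + 1) = u)}.encard = 1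

/-- A two-way infinite Eulerian path in the simple graph `G`. -/
def TwoWayEulerian (G : CGraph) (p : ℤ → ℕ) : Prop :=
  (∀ n : ℤ, G.adj (p n) (p (n + 1)) = true) ∧
    ∀ u v, G.adj u v = true →
      {n : ℤ | (p n = u ∧ p (n + 1) = v) ∨ (p n = v ∧ p (n + 1) = u)}.encard = 1

end CGraph

/-- A uniformly highly computable sequence of graphs. -/
def UniformlyHC (Gs : ℕ → CGraph) : Prop :=
  (Computable fun p : ℕ × ℕ => (Gs p.1).verts p.2) ∧
  (Computable fun p : ℕ × ℕ × ℕ => (Gs p.1).adj p.2.1 p.2.2) ∧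
  (∀ e v, ((Gs e).neighborSet v).Finite) ∧
  ∃ d : ℕ → ℕ → ℕ, Computable₂ d ∧ ∀ e v, (Gs e).degree v = d e v
/-! ## Computable multigraphs on `ℕ` -/

/-- A multigraph with vertex set a subset of `ℕ`, given by an edge-multiplicity function. -/
structure MGraph where
  verts : ℕ → Bool
  mult : ℕ → ℕ → ℕ
  symm : ∀ u v, mult u v = mult v u
  mult_verts : ∀ u v, 0 < mult u v → verts u = true ∧ verts v = true

namespace MGraph

/-- Degree of a vertex (loops counted twice). -/
noncomputable def deg (G : MGraph) (v : ℕ) : ℕ := (∑ᶠ u, G.mult v u) + G.mult v v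

/-- The underlying simple graph (parallel edges collapsed, loops discarded). -/
def toSimpleGraph (G : MGraph) : SimpleGraph ℕ where
  Adj u v := u ≠ v ∧ 0 < G.mult u v
  symm := ⟨fun u v h => ⟨h.1.symm, by rw [G.symm v u]; exact h.2⟩⟩
  loopless := ⟨fun v h => h.1 rfl⟩

/-- Connectedness (of the subgraph induced on the vertex set). -/
def Connected (G : MGraph) : Prop :=
  (∃ v, G.verts v = true) ∧
    ∀ u v, G.verts u = true → G.verts v = true → G.toSimpleGraph.Reachable u v

/-- The simple graph obtained by deleting (all parallel copies of) the listed edges. -/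
def deleteEdges (G : MGraph) (E : List (ℕ × ℕ)) : SimpleGraph ℕ where
  Adj u v := u ≠ v ∧ 0 < G.mult u v ∧ (u, v) ∉ E ∧ (v, u) ∉ E
  symm := ⟨fun u v h =>
    ⟨h.1.symm, (by rw [G.symm v u]; exact h.2.1), h.2.2.2, h.2.2.1⟩⟩
  loopless := ⟨fun v h => h.1 rfl⟩

/-- The number of infinite connected components of `G ∖ E`. -/
noncomputable def comp (G : MGraph) (E : List (ℕ × ℕ)) : ℕ :=
  {C : (G.deleteEdges E).ConnectedComponent | C.supp.Infinite}.ncard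

/-- The number of ends of the multigraph `G`. -/
noncomputable def numEnds (G : MGraph) : ℕ∞ :=
  ⨆ E : List (ℕ × ℕ), (G.comp E : ℕ∞)

/-- A highly computable multigraph. -/
def HighlyComputable (G : MGraph) : Prop :=
  Computable G.verts ∧ Computable₂ G.mult ∧
    (∀ v, (Function.support fun u => G.mult v u).Finite) ∧
    ∃ d : ℕ → ℕ, Computable d ∧ ∀ v, G.deg v = d v

/-- A one-way infinite Eulerian path in the multigraph `G`: between any two distinct vertices
`u, v` the path makes exactly `mult u v` steps, and exactly `mult u u` loop steps at each `u`. -/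
def OneWayEulerian (G : MGraph) (p : ℕ → ℕ) : Prop :=
  (∀ u v, u ≠ v →
      {n : ℕ | (p n = u ∧ p (n + 1) = v) ∨ (p n = v ∧ p (n + 1) = u)}.encard =
        (G.mult u v : ℕ∞)) ∧
  ∀ u, {n : ℕ | p n = u ∧ p (n + 1) = u}.encard = (G.mult u u : ℕ∞)

/-- A two-way infinite Eulerian path in the multigraph `G`. -/
def TwoWayEulerian (G : MGraph) (p : ℤ → ℕ) : Prop :=
  (∀ u v, u ≠ v →
      {n : ℤ | (p n = u ∧ p (n + 1) = v) ∨ (p n = v ∧ p (n + 1) = u)}.encard =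
        (G.mult u v : ℕ∞)) ∧
  ∀ u, {n : ℤ | p n = u ∧ p (n + 1) = u}.encard = (G.mult u u : ℕ∞)

end MGraph


/-- `e` is an index (program) for the highly computable multigraph `G`. -/
def MIndexOf (e : ℕ) (G : MGraph) : Prop :=
  (∀ v, evalIdx e (Nat.pair 0 v) = Part.some (G.verts v).toNat) ∧
  (∀ u v, evalIdx e (Nat.pair 1 (Nat.pair u v)) = Part.some (G.mult u v)) ∧
  (∀ v, evalIdx e (Nat.pair 2 v) = Part.some (G.deg v))

/-- A uniformly highly computable sequence of multigraphs. -/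
def MUniformlyHC (Gs : ℕ → MGraph) : Prop :=
  (Computable fun p : ℕ × ℕ => (Gs p.1).verts p.2) ∧
  (Computable fun p : ℕ × ℕ × ℕ => (Gs p.1).mult p.2.1 p.2.2) ∧
  (∀ e v, (Function.support fun u => (Gs e).mult v u).Finite) ∧
  ∃ d : ℕ → ℕ → ℕ, Computable₂ d ∧ ∀ e v, (Gs e).deg v = d e v

/-! ## Automatic presentations via explicit DFA data -/

/-- Explicit DFA data: a transition table, a start state, and a list of accepting states. -/
abbrev DFAData : Type := List (List ℕ) × ℕ × List ℕ

/-- Acceptance of a word by explicit DFA data. -/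
def dfaAccepts (D : DFAData) (w : List ℕ) : Prop :=
  w.foldl (fun q a => (D.1.getD q []).getD a 0) D.2.1 ∈ D.2.2

/-- Data of an automatic presentation: alphabet size, and DFAs for the domain language `L`, the
equality relation, and the adjacency relation (the latter two on convolutions of words). -/
abbrev PresData : Type := ℕ × DFAData × DFAData × DFAData

/-- Convolution of two words over the alphabet `{0, …, k-1}`, with padding symbol `k`;
letters of the convolution are coded by `Nat.pair`. -/
def conv (k : ℕ) (u v : List ℕ) : List ℕ :=
  (List.range (max u.length v.length)).map fun i => Nat.pair (u.getD i k) (v.getD i k)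

/-- `P` is an automatic presentation of the graph `G`. -/
def Presents (P : PresData) (G : CGraph) : Prop :=
  ∃ h : List ℕ → ℕ,
    (∀ w, dfaAccepts P.2.1 w → ∀ a ∈ w, a < P.1) ∧
    (∀ w, dfaAccepts P.2.1 w → G.verts (h w) = true) ∧
    (∀ v, G.verts v = true → ∃ w, dfaAccepts P.2.1 w ∧ h w = v) ∧
    (∀ u w, dfaAccepts P.2.1 u → dfaAccepts P.2.1 w →
      (dfaAccepts P.2.2.1 (conv P.1 u w) ↔ h u = h w)) ∧
    (∀ u w, dfaAccepts P.2.1 u → dfaAccepts P.2.1 w →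
      (dfaAccepts P.2.2.2 (conv P.1 u w) ↔ G.adj (h u) (h w) = true))

set_option maxHeartbeats 1000000
namespace Stmt3

open Nat.Partrec (Code)
open Nat.Partrec.Code

/-- Bounded-fuel query to the `e`-th machine. -/
def qry (e n x : ℕ) : Option ℕ := evaln n (Denumerable.ofNat Code e) x

/-- Endpoints of the listed edges. -/
def endpts (E : List (ℕ × ℕ)) : List ℕ := E.flatMap fun p => [p.1, p.2]

/-- Whether `(a, b)` occurs in `E` (in either order). -/
def memE (E : List (ℕ × ℕ)) (a b : ℕ) : Bool :=
  E.any fun p => (decide (p.1 = a) && decide (p.2 = b)) || (decide (p.1 = b) && decide (p.2 = a))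

/-- Check that `l` is a walk from `u` to `v` avoiding `E`, as certified by fuel-`n` queries. -/
def pathOK (e n : ℕ) (E : List (ℕ × ℕ)) (u v : ℕ) (l : List ℕ) : Bool :=
  decide (l.head? = some u) && decide (l.reverse.head? = some v) &&
  ((List.range (l.length - 1)).all fun i =>
    !(memE E (l.getD i 0) (l.getD (i+1) 0)) &&
      decide (qry e n (Nat.pair 1 (Nat.pair (l.getD i 0) (l.getD (i+1) 0))) = some 1))

/-- Vertices paired with `t` by an edge of `E`. -/
def partners (E : List (ℕ × ℕ)) (t : ℕ) : List ℕ :=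
  E.filterMap fun p =>
    cond (decide (p.1 = t)) (some p.2) (cond (decide (p.2 = t)) (some p.1) none)

/-- A duplicate-free list with the same members as `W`. -/
def dedupL (W : List ℕ) : List ℕ :=
  (List.range (W.foldr max 0 + 1)).filterMap fun w =>
    cond (W.any fun x => decide (x = w)) (some w) none

/-- Check that `T` contains `u` and is closed under adjacency avoiding `E`,
as certified by fuel-`n` queries. -/
def closedOK (e n : ℕ) (E : List (ℕ × ℕ)) (u : ℕ) (T : List ℕ) : Bool :=
  (T.any fun x => decide (x = u)) &&
  (T.all fun t =>
    Option.casesOn (qry e n (Nat.pair 2 t)) false fun d =>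
      ((dedupL (T ++ partners E t)).all fun w =>
          (qry e n (Nat.pair 1 (Nat.pair t w))).isSome) &&
      decide (((dedupL (T ++ partners E t)).filterMap fun w =>
          cond (decide (qry e n (Nat.pair 1 (Nat.pair t w)) = some 1)) (some w) none).length = d))

/-- The elements of `v0 :: endpts E` certified to be vertices by fuel-`n` queries. -/
def verL (e n : ℕ) (E : List (ℕ × ℕ)) (v0 : ℕ) : List ℕ :=
  (v0 :: endpts E).filterMap fun w =>
    cond (decide (qry e n (Nat.pair 0 w) = some 1)) (some w) none

/-- The master semidecision procedure for `E ∉ Sep G`. -/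
def check (e : ℕ) (E : List (ℕ × ℕ)) (n : ℕ) : Bool :=
  (List.range (n+1)).any fun v0 =>
    decide (qry e n (Nat.pair 0 v0) = some 1) &&
    ((v0 :: endpts E).all fun w => (qry e n (Nat.pair 0 w)).isSome) &&
    ((verL e n E v0).all fun u => (verL e n E v0).all fun v =>
      (List.range (n+1)).any fun m =>
        pathOK e n E u v (Denumerable.ofNat (List ℕ) m) ||
        closedOK e n E u (Denumerable.ofNat (List ℕ) m) ||
        closedOK e n E v (Denumerable.ofNat (List ℕ) m))

section PrimrecLemmas

open Primrec

variable {α : Type} {β : Type} [Primcodable α] [Primcodable β]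

theorem eq_dec_pr {γ : Type} [Primcodable γ] [DecidableEq γ] {f g : α → γ}
    (hf : Primrec f) (hg : Primrec g) : Primrec fun a => decide (f a = g a) :=
  (Primrec.eq.comp hf hg).decide

theorem list_all_pr {f : α → List β} {p : α → β → Bool} (hf : Primrec f)
    (hp : Primrec₂ p) : Primrec fun a => (f a).all (p a) := by
  have key : ∀ (l : List β) (q : β → Bool), l.all q = l.foldr (fun b r => q b && r) true := by
    intro l q; induction l with
    | nil => rfl
    | cons b l ih => simp [List.all_cons, ih]
  exact (list_foldr hf (const true)
    (Primrec.and.comp (hp.comp fst (fst.comp snd)) (snd.comp snd)).to₂).of_eq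
    fun a => (key (f a) (p a)).symm

theorem list_any_pr {f : α → List β} {p : α → β → Bool} (hf : Primrec f)
    (hp : Primrec₂ p) : Primrec fun a => (f a).any (p a) := by
  have key : ∀ (l : List β) (q : β → Bool), l.any q = l.foldr (fun b r => q b || r) false := by
    intro l q; induction l with
    | nil => rfl
    | cons b l ih => simp [List.any_cons, ih]
  exact (list_foldr hf (const false)
    (Primrec.or.comp (hp.comp fst (fst.comp snd)) (snd.comp snd)).to₂).of_eq
    fun a => (key (f a) (p a)).symm

theorem qry_pr {f g h : α → ℕ} (hf : Primrec f) (hg : Primrec g) (hh : Primrec h) :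
    Primrec fun a => qry (f a) (g a) (h a) :=
  primrec_evaln.comp ((hg.pair ((Primrec.ofNat Code).comp hf)).pair hh)

theorem memE_pr {f : α → List (ℕ × ℕ)} {g h : α → ℕ} (hf : Primrec f) (hg : Primrec g)
    (hh : Primrec h) : Primrec fun a => memE (f a) (g a) (h a) :=
  list_any_pr hf <| .mk <|
    Primrec.or.comp
      (Primrec.and.comp
        (eq_dec_pr (fst.comp snd) (hg.comp fst))
        (eq_dec_pr (snd.comp snd) (hh.comp fst)))
      (Primrec.and.comp
        (eq_dec_pr (fst.comp snd) (hh.comp fst))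
        (eq_dec_pr (snd.comp snd) (hg.comp fst)))

theorem pathOK_pr {e n : α → ℕ} {F : α → List (ℕ × ℕ)} {u v : α → ℕ} {l : α → List ℕ}
    (he : Primrec e) (hn : Primrec n) (hF : Primrec F) (hu : Primrec u) (hv : Primrec v)
    (hl : Primrec l) : Primrec fun a => pathOK (e a) (n a) (F a) (u a) (v a) (l a) := by
  have hget : Primrec fun x : α × ℕ => (l x.1).getD x.2 0 :=
    (list_getD 0).comp (hl.comp fst) snd
  have hget1 : Primrec fun x : α × ℕ => (l x.1).getD (x.2+1) 0 :=
    (list_getD 0).comp (hl.comp fst) (succ.comp snd)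
  refine Primrec.and.comp (Primrec.and.comp ?_ ?_) ?_
  · exact eq_dec_pr (list_head?.comp hl) (option_some.comp hu)
  · exact eq_dec_pr (list_head?.comp (list_reverse.comp hl)) (option_some.comp hv)
  · refine list_all_pr (list_range.comp (nat_sub.comp (list_length.comp hl) (const 1))) ?_
    refine .mk <| Primrec.and.comp (Primrec.not.comp ?_) ?_
    · exact memE_pr (hF.comp fst) hget hget1
    · exact eq_dec_pr
        (qry_pr (he.comp fst) (hn.comp fst)
          (Primrec₂.natPair.comp (const 1) (Primrec₂.natPair.comp hget hget1)))
        (const (some 1))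

theorem partners_pr {f : α → List (ℕ × ℕ)} {g : α → ℕ} (hf : Primrec f) (hg : Primrec g) :
    Primrec fun a => partners (f a) (g a) :=
  listFilterMap hf <| .mk <|
    Primrec.cond (eq_dec_pr (fst.comp snd) (hg.comp fst))
      (option_some.comp (snd.comp snd))
      (Primrec.cond (eq_dec_pr (snd.comp snd) (hg.comp fst))
        (option_some.comp (fst.comp snd)) (const none))

theorem dedupL_pr {f : α → List ℕ} (hf : Primrec f) : Primrec fun a => dedupL (f a) := by
  have step : Primrec₂ fun (_ : α) (p : ℕ × ℕ) => max p.1 p.2 :=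
    .mk (nat_max.comp (fst.comp snd) (snd.comp snd))
  have hmax : Primrec fun a => (f a).foldr max 0 :=
    (list_foldr hf (const 0) step).of_eq fun a => rfl
  refine listFilterMap (list_range.comp (succ.comp hmax)) (.mk ?_)
  exact Primrec.cond
    (list_any_pr (hf.comp fst) (.mk <| eq_dec_pr snd (snd.comp fst)))
    (option_some.comp snd) (const none)

theorem closedOK_pr {e n : α → ℕ} {F : α → List (ℕ × ℕ)} {u : α → ℕ} {T : α → List ℕ}
    (he : Primrec e) (hn : Primrec n) (hF : Primrec F) (hu : Primrec u) (hT : Primrec T) :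
    Primrec fun a => closedOK (e a) (n a) (F a) (u a) (T a) := by
  have hW : Primrec fun p : α × ℕ => dedupL (T p.1 ++ partners (F p.1) p.2) :=
    dedupL_pr (list_append.comp (hT.comp fst) (partners_pr (hF.comp fst) snd))
  refine Primrec.and.comp ?_ ?_
  · exact list_any_pr hT (.mk <| eq_dec_pr snd (hu.comp fst))
  · refine list_all_pr hT (.mk ?_)
    refine option_casesOn
      (qry_pr (he.comp fst) (hn.comp fst) (Primrec₂.natPair.comp (const 2) snd))
      (const false) (.mk ?_)
    -- context : (α × ℕ) × ℕ  (pair (a,t) d)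
    refine Primrec.and.comp ?_ ?_
    · refine list_all_pr (hW.comp fst) (.mk ?_)
      -- context : ((α × ℕ) × ℕ) × ℕ
      exact option_isSome.comp
        (qry_pr (he.comp (fst.comp (fst.comp fst))) (hn.comp (fst.comp (fst.comp fst)))
          (Primrec₂.natPair.comp (const 1)
            (Primrec₂.natPair.comp (snd.comp (fst.comp fst)) snd)))
    · refine eq_dec_pr (list_length.comp ?_) snd
      refine listFilterMap (hW.comp fst) (.mk ?_)
      exact Primrec.cond
        (eq_dec_pr
          (qry_pr (he.comp (fst.comp (fst.comp fst))) (hn.comp (fst.comp (fst.comp fst)))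
            (Primrec₂.natPair.comp (const 1)
              (Primrec₂.natPair.comp (snd.comp (fst.comp fst)) snd)))
          (const (some 1)))
        (option_some.comp snd) (const none)

theorem endpts_pr {f : α → List (ℕ × ℕ)} (hf : Primrec f) :
    Primrec fun a => endpts (f a) :=
  list_flatMap hf (.mk <| list_cons.comp (fst.comp snd)
    (list_cons.comp (snd.comp snd) (const [])))

theorem verL_pr {e n : α → ℕ} {F : α → List (ℕ × ℕ)} {v0 : α → ℕ}
    (he : Primrec e) (hn : Primrec n) (hF : Primrec F) (hv0 : Primrec v0) :
    Primrec fun a => verL (e a) (n a) (F a) (v0 a) := by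
  refine listFilterMap (list_cons.comp hv0 (endpts_pr hF)) (.mk ?_)
  exact Primrec.cond
    (eq_dec_pr
      (qry_pr (he.comp fst) (hn.comp fst) (Primrec₂.natPair.comp (const 0) snd))
      (const (some 1)))
    (option_some.comp snd) (const none)

theorem check_pr : Primrec fun a : (ℕ × List (ℕ × ℕ)) × ℕ => check a.1.1 a.1.2 a.2 := by
  have he : Primrec fun a : (ℕ × List (ℕ × ℕ)) × ℕ => a.1.1 := fst.comp fst
  have hE : Primrec fun a : (ℕ × List (ℕ × ℕ)) × ℕ => a.1.2 := snd.comp fst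
  have hn : Primrec fun a : (ℕ × List (ℕ × ℕ)) × ℕ => a.2 := snd
  refine list_any_pr (list_range.comp (succ.comp hn)) (.mk ?_)
  -- context β := ((ℕ × List (ℕ × ℕ)) × ℕ) × ℕ   (pair a v0)
  have he' : Primrec fun b : ((ℕ × List (ℕ × ℕ)) × ℕ) × ℕ => b.1.1.1 := fst.comp (fst.comp fst)
  have hE' : Primrec fun b : ((ℕ × List (ℕ × ℕ)) × ℕ) × ℕ => b.1.1.2 := snd.comp (fst.comp fst)
  have hn' : Primrec fun b : ((ℕ × List (ℕ × ℕ)) × ℕ) × ℕ => b.1.2 := snd.comp fst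
  have hv0 : Primrec fun b : ((ℕ × List (ℕ × ℕ)) × ℕ) × ℕ => b.2 := snd
  have hverL : Primrec fun b : ((ℕ × List (ℕ × ℕ)) × ℕ) × ℕ => verL b.1.1.1 b.1.2 b.1.1.2 b.2 :=
    verL_pr he' hn' hE' hv0
  refine Primrec.and.comp (Primrec.and.comp ?_ ?_) ?_
  · exact eq_dec_pr
      (qry_pr he' hn' (Primrec₂.natPair.comp (const 0) hv0)) (const (some 1))
  · exact list_all_pr (list_cons.comp hv0 (endpts_pr hE'))
      (.mk <| option_isSome.comp
        (qry_pr (he'.comp fst) (hn'.comp fst) (Primrec₂.natPair.comp (const 0) snd)))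
  · refine list_all_pr hverL (.mk ?_)
    -- context γ := (((ℕ × List (ℕ × ℕ)) × ℕ) × ℕ) × ℕ   (pair b u)
    refine list_all_pr (hverL.comp fst) (.mk ?_)
    -- context δ := γ × ℕ   (pair c v)
    have heD : Primrec fun d : ((((ℕ × List (ℕ × ℕ)) × ℕ) × ℕ) × ℕ) × ℕ => d.1.1.1.1.1 :=
      fst.comp (fst.comp (fst.comp (fst.comp fst)))
    have hED : Primrec fun d : ((((ℕ × List (ℕ × ℕ)) × ℕ) × ℕ) × ℕ) × ℕ => d.1.1.1.1.2 :=
      snd.comp (fst.comp (fst.comp (fst.comp fst)))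
    have hnD : Primrec fun d : ((((ℕ × List (ℕ × ℕ)) × ℕ) × ℕ) × ℕ) × ℕ => d.1.1.1.2 :=
      snd.comp (fst.comp (fst.comp fst))
    have huD : Primrec fun d : ((((ℕ × List (ℕ × ℕ)) × ℕ) × ℕ) × ℕ) × ℕ => d.1.2 :=
      snd.comp fst
    have hvD : Primrec fun d : ((((ℕ × List (ℕ × ℕ)) × ℕ) × ℕ) × ℕ) × ℕ => d.2 :=
      snd
    refine list_any_pr (list_range.comp (succ.comp hnD)) (.mk ?_)
    -- context ε := δ × ℕ  (pair d m)
    have hπ : Primrec fun x : (((((ℕ × List (ℕ × ℕ)) × ℕ) × ℕ) × ℕ) × ℕ) × ℕ =>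
        Denumerable.ofNat (List ℕ) x.2 := (Primrec.ofNat (List ℕ)).comp snd
    exact Primrec.or.comp
      (Primrec.or.comp
        (pathOK_pr (heD.comp fst) (hnD.comp fst) (hED.comp fst) (huD.comp fst)
          (hvD.comp fst) hπ)
        (closedOK_pr (heD.comp fst) (hnD.comp fst) (hED.comp fst) (huD.comp fst) hπ))
      (closedOK_pr (heD.comp fst) (hnD.comp fst) (hED.comp fst) (hvD.comp fst) hπ)

end PrimrecLemmas

section Main

variable {G : CGraph} {E : List (ℕ × ℕ)} {e : ℕ}

/-! ### Query facts -/

theorem qry_mono {n n' x y : ℕ} (h : n ≤ n') (hq : qry e n x = some y) :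
    qry e n' x = some y :=
  evaln_mono h hq

theorem qry_sound {n x y : ℕ} (hq : qry e n x = some y) : y ∈ evalIdx e x :=
  evaln_sound hq

theorem qry_conv {x y : ℕ} (hx : evalIdx e x = Part.some y) :
    ∃ n0, ∀ n ≥ n0, qry e n x = some y := by
  have hy : y ∈ evalIdx e x := by rw [hx]; exact Part.mem_some y
  obtain ⟨k, hk⟩ := evaln_complete.mp hy
  exact ⟨k, fun n hn => qry_mono hn hk⟩

theorem qv_val (hidx : CGraph.IndexOf e G) {n v k : ℕ}
    (h : qry e n (Nat.pair 0 v) = some k) : k = (G.verts v).toNat := by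
  have h' := qry_sound h; rw [hidx.1 v] at h'; exact Part.mem_some_iff.mp h'

theorem qa_val (hidx : CGraph.IndexOf e G) {n a b k : ℕ}
    (h : qry e n (Nat.pair 1 (Nat.pair a b)) = some k) : k = (G.adj a b).toNat := by
  have h' := qry_sound h; rw [hidx.2.1 a b] at h'; exact Part.mem_some_iff.mp h'

theorem qd_val (hidx : CGraph.IndexOf e G) {n v k : ℕ}
    (h : qry e n (Nat.pair 2 v) = some k) : k = G.degree v := by
  have h' := qry_sound h; rw [hidx.2.2 v] at h'; exact Part.mem_some_iff.mp h'

theorem toNat_eq_one {b : Bool} : b.toNat = 1 ↔ b = true := by cases b <;> simp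

/-! ### List facts -/

theorem memE_iff {a b : ℕ} : memE E a b = true ↔ (a, b) ∈ E ∨ (b, a) ∈ E := by
  simp only [memE, List.any_eq_true, Bool.or_eq_true, Bool.and_eq_true, decide_eq_true_eq]
  constructor
  · rintro ⟨⟨x, y⟩, hp, (⟨rfl, rfl⟩ | ⟨rfl, rfl⟩)⟩
    · exact Or.inl hp
    · exact Or.inr hp
  · rintro (h | h)
    · exact ⟨(a, b), h, Or.inl ⟨rfl, rfl⟩⟩
    · exact ⟨(b, a), h, Or.inr ⟨rfl, rfl⟩⟩

theorem mem_endpts {x : ℕ} : x ∈ endpts E ↔ ∃ p ∈ E, p.1 = x ∨ p.2 = x := by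
  simp only [endpts, List.mem_flatMap, List.mem_cons, List.mem_singleton]
  constructor
  · rintro ⟨p, hp, (h | h)⟩
    · exact ⟨p, hp, Or.inl h.symm⟩
    · rcases h with h | h
      · exact ⟨p, hp, Or.inr h.symm⟩
      · cases h
  · rintro ⟨p, hp, (h | h)⟩
    · exact ⟨p, hp, Or.inl h.symm⟩
    · exact ⟨p, hp, Or.inr (Or.inl h.symm)⟩

theorem filterMap_cond {α : Type} (p : α → Bool) (l : List α) :
    (l.filterMap fun w => cond (p w) (some w) none) = l.filter p := by
  induction l with
  | nil => rfl
  | cons a l ih => cases h : p a <;> simp [List.filterMap_cons, List.filter_cons, h, ih]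

theorem foldr_max_le {a : ℕ} {W : List ℕ} (h : a ∈ W) : a ≤ W.foldr max 0 := by
  induction W with
  | nil => cases h
  | cons b W ih =>
    rcases List.mem_cons.mp h with rfl | h'
    · exact le_max_left _ _
    · exact le_trans (ih h') (le_max_right _ _)

theorem mem_dedupL {a : ℕ} {W : List ℕ} : a ∈ dedupL W ↔ a ∈ W := by
  unfold dedupL
  rw [filterMap_cond, List.mem_filter]
  simp only [List.mem_range, List.any_eq_true, decide_eq_true_eq]
  constructor
  · rintro ⟨_, x, hx, rfl⟩; exact hx
  · intro h
    exact ⟨Nat.lt_succ_of_le (foldr_max_le h), a, h, rfl⟩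

theorem dedupL_nodup (W : List ℕ) : (dedupL W).Nodup := by
  unfold dedupL
  rw [filterMap_cond]
  exact List.nodup_range.filter _

theorem mem_partners {w t : ℕ} : w ∈ partners E t ↔ (t, w) ∈ E ∨ (w, t) ∈ E := by
  unfold partners
  simp only [List.mem_filterMap]
  constructor
  · rintro ⟨⟨x, y⟩, hp, hc⟩
    by_cases h1 : x = t
    · subst h1
      simp only [decide_eq_true_eq] at hc
      simp at hc
      subst hc; exact Or.inl hp
    · by_cases h2 : y = t
      · subst h2
        simp [h1] at hc
        subst hc; exact Or.inr hp
      · simp [h1, h2] at hc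
  · rintro (h | h)
    · exact ⟨(t, w), h, by simp⟩
    · refine ⟨(w, t), h, ?_⟩
      by_cases hwt : w = t <;> simp [hwt]

/-! ### Graph facts -/

theorem verts_of_adj {u v : ℕ} (h : G.adj u v = true) : G.verts u = true :=
  (G.adj_verts u v h).1

theorem walk_to_S : ∀ {u v0 : ℕ}, G.toSimpleGraph.Walk u v0 → G.verts v0 = true →
    ∃ s, G.verts s = true ∧ (s = v0 ∨ s ∈ endpts E) ∧ (G.deleteEdges E).Reachable u s := by
  intro u v0 w
  induction w with
  | nil => exact fun hv0 => ⟨_, hv0, Or.inl rfl, SimpleGraph.Reachable.refl _⟩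
  | @cons x y _ h p ih =>
    intro hv0
    by_cases hm : (x, y) ∈ E ∨ (y, x) ∈ E
    · have hx : G.verts x = true := verts_of_adj h
      refine ⟨x, hx, Or.inr ?_, SimpleGraph.Reachable.refl _⟩
      rw [mem_endpts]
      rcases hm with h' | h'
      · exact ⟨(x, y), h', Or.inl rfl⟩
      · exact ⟨(y, x), h', Or.inr rfl⟩
    · obtain ⟨s, h1, h2, h3⟩ := ih hv0
      push_neg at hm
      exact ⟨s, h1, h2, (show (G.deleteEdges E).Adj _ _ from ⟨h, hm.1, hm.2⟩).reachable.trans h3⟩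

theorem supp_has_vertex {C : (G.deleteEdges E).ConnectedComponent} (h : C.supp.Infinite) :
    ∃ u, u ∈ C.supp ∧ G.verts u = true := by
  obtain ⟨w1, h1, w2, h2, hne⟩ := h.nontrivial
  have hr : (G.deleteEdges E).Reachable w1 w2 := by
    have h1' := h1; have h2' := h2
    rw [SimpleGraph.ConnectedComponent.mem_supp_iff] at h1' h2'
    exact (SimpleGraph.ConnectedComponent.eq).mp (h1'.trans h2'.symm)
  obtain ⟨p⟩ := hr
  cases p with
  | nil => exact absurd rfl hne
  | cons h' p' => exact ⟨w1, h1, verts_of_adj h'.1⟩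

theorem closed_finite {u : ℕ} {T : List ℕ} (hu : u ∈ T)
    (hcl : ∀ t ∈ T, ∀ w, (G.deleteEdges E).Adj t w → w ∈ T) :
    ((G.deleteEdges E).connectedComponentMk u).supp.Finite := by
  have aux : ∀ (a b : ℕ) (p : (G.deleteEdges E).Walk a b), a ∈ T → b ∈ T := by
    intro a b p
    induction p with
    | nil => exact id
    | cons h' p ih => intro ha; exact ih (hcl _ ha _ h')
  apply T.finite_toSet.subset
  intro x hx
  rw [SimpleGraph.ConnectedComponent.mem_supp_iff, SimpleGraph.ConnectedComponent.eq] at hx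
  obtain ⟨p⟩ := hx.symm
  exact aux u x p hu

theorem chain_reach : ∀ (l : List ℕ), l ≠ [] →
    (∀ i, i + 1 < l.length → (G.deleteEdges E).Adj (l.getD i 0) (l.getD (i+1) 0)) →
    (G.deleteEdges E).Reachable (l.getD 0 0) (l.getD (l.length - 1) 0) := by
  intro l
  induction l with
  | nil => intro h; exact absurd rfl h
  | cons a l ih =>
    intro _ hadj
    cases l with
    | nil => exact SimpleGraph.Reachable.refl _
    | cons b r =>
      have h0 : (G.deleteEdges E).Adj a b := hadj 0 (by simp)
      have hr := ih (by simp) (fun i hi => by simpa using hadj (i+1) (by simpa using hi))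
      simpa [List.getD_cons_succ] using h0.reachable.trans hr

end Main

section Sound

variable {G : CGraph} {E : List (ℕ × ℕ)} {e : ℕ}

theorem adj_true_of_qry (hidx : CGraph.IndexOf e G) {n a b : ℕ}
    (h : qry e n (Nat.pair 1 (Nat.pair a b)) = some 1) : G.adj a b = true :=
  toNat_eq_one.mp (qa_val hidx h).symm

theorem verts_true_of_qry (hidx : CGraph.IndexOf e G) {n v : ℕ}
    (h : qry e n (Nat.pair 0 v) = some 1) : G.verts v = true :=
  toNat_eq_one.mp (qv_val hidx h).symm

theorem pathOK_sound (hidx : CGraph.IndexOf e G) {n u v : ℕ} {l : List ℕ}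
    (h : pathOK e n E u v l = true) : (G.deleteEdges E).Reachable u v := by
  unfold pathOK at h
  simp only [Bool.and_eq_true, decide_eq_true_eq, List.all_eq_true, List.mem_range,
    Bool.not_eq_true'] at h
  obtain ⟨⟨h1, h2⟩, h3⟩ := h
  have hne : l ≠ [] := by
    intro hl; rw [hl] at h1; simp at h1
  have hadj : ∀ i, i + 1 < l.length →
      (G.deleteEdges E).Adj (l.getD i 0) (l.getD (i+1) 0) := by
    intro i hi
    have hi' : i < l.length - 1 := by omega
    obtain ⟨hm, hq⟩ := h3 i hi'
    have hb : G.adj (l.getD i 0) (l.getD (i+1) 0) = true := adj_true_of_qry hidx hq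
    have hm0 : ¬ (memE E (l.getD i 0) (l.getD (i+1) 0) = true) := by rw [hm]; simp
    have hm' : ¬((l.getD i 0, l.getD (i+1) 0) ∈ E ∨ (l.getD (i+1) 0, l.getD i 0) ∈ E) :=
      fun hc => hm0 (memE_iff.mpr hc)
    exact ⟨hb, fun hc => hm' (Or.inl hc), fun hc => hm' (Or.inr hc)⟩
  have hreach := chain_reach l hne hadj
  have hu : l.getD 0 0 = u := by
    cases l with
    | nil => exact absurd rfl hne
    | cons a t => simp only [List.head?_cons, Option.some.injEq] at h1; simpa using h1
  have hv : l.getD (l.length - 1) 0 = v := by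
    rw [List.head?_reverse] at h2
    rw [List.getD_eq_getElem?_getD, List.getLast?_eq_getElem?] at *
    rw [h2]; rfl
  rwa [hu, hv] at hreach

theorem closedOK_sound (hidx : CGraph.IndexOf e G) (hHC : G.HighlyComputable)
    {n u : ℕ} {T : List ℕ} (h : closedOK e n E u T = true) :
    ((G.deleteEdges E).connectedComponentMk u).supp.Finite := by
  unfold closedOK at h
  simp only [Bool.and_eq_true, List.any_eq_true, List.all_eq_true, decide_eq_true_eq] at h
  obtain ⟨⟨x, hxT, hxu⟩, hT⟩ := h
  subst hxu
  refine closed_finite hxT ?_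
  intro t ht w hw
  have h2 := hT t ht
  cases hq : qry e n (Nat.pair 2 t) with
  | none => rw [hq] at h2; exact absurd h2 (by simp)
  | some d =>
    rw [hq] at h2
    simp only [Bool.and_eq_true, List.all_eq_true, decide_eq_true_eq] at h2
    obtain ⟨hAll, hLen⟩ := h2
    have hd : d = G.degree t := qd_val hidx hq
    rw [filterMap_cond] at hLen
    set W := dedupL (T ++ partners E t) with hW
    set L := W.filter (fun w => decide (qry e n (Nat.pair 1 (Nat.pair t w)) = some 1)) with hL
    have hLnd : L.Nodup := (dedupL_nodup _).filter _
    have hLsub : ∀ y ∈ L, y ∈ G.neighborSet t := by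
      intro y hy
      have := List.of_mem_filter hy
      simp only [decide_eq_true_eq] at this
      exact adj_true_of_qry hidx this
    have hsub2 : (L.toFinset : Set ℕ) ⊆ G.neighborSet t := by
      intro y hy
      exact hLsub y (by simpa using hy)
    have hNfin : (G.neighborSet t).Finite := hHC.2.2.1 t
    have heq : (L.toFinset : Set ℕ) = G.neighborSet t := by
      apply Set.eq_of_subset_of_ncard_le hsub2 ?_ hNfin
      rw [Set.ncard_coe_finset, List.toFinset_card_of_nodup hLnd, hLen, hd]
      exact le_of_eq rfl
    -- closure step
    have hwNS : w ∈ G.neighborSet t := hw.1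
    rw [← heq] at hwNS
    have hwL : w ∈ L := by simpa using hwNS
    have hwW : w ∈ W := (List.mem_filter.mp hwL).1
    rcases List.mem_append.mp (mem_dedupL.mp hwW) with h' | h'
    · exact h'
    · exfalso
      rcases mem_partners.mp h' with h'' | h''
      · exact hw.2.1 h''
      · exact hw.2.2 h''

theorem check_sound (hidx : CGraph.IndexOf e G) (hHC : G.HighlyComputable)
    (hconn : G.Connected) {n : ℕ} (h : check e E n = true) : ¬ 2 ≤ G.comp E := by
  intro h2
  classical
  have h2' : 2 ≤ {C : (G.deleteEdges E).ConnectedComponent | C.supp.Infinite}.ncard := h2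
  have hIfin : {C : (G.deleteEdges E).ConnectedComponent | C.supp.Infinite}.Finite := by
    by_contra hf
    rw [Set.Infinite.ncard hf] at h2'
    omega
  have h1lt : 1 < {C : (G.deleteEdges E).ConnectedComponent | C.supp.Infinite}.ncard := h2'
  obtain ⟨C1, C2, hC1, hC2, hne⟩ := (Set.one_lt_ncard_iff hIfin).mp h1lt
  unfold check at h
  simp only [List.any_eq_true, List.mem_range, Bool.and_eq_true, decide_eq_true_eq,
    List.all_eq_true] at h
  obtain ⟨v0, hv0lt, ⟨⟨hq1, hall⟩, hpairs⟩⟩ := h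
  have hv0 : G.verts v0 = true := verts_true_of_qry hidx hq1
  have hmemver : ∀ s, G.verts s = true → (s = v0 ∨ s ∈ endpts E) → s ∈ verL e n E v0 := by
    intro s hs hsm
    have hsmem : s ∈ v0 :: endpts E := by
      rcases hsm with rfl | h'
      · exact List.mem_cons_self
      · exact List.mem_cons_of_mem _ h'
    unfold verL
    rw [filterMap_cond, List.mem_filter]
    refine ⟨hsmem, ?_⟩
    obtain ⟨k, hk⟩ := Option.isSome_iff_exists.mp (hall s hsmem)
    have hk' : k = (G.verts s).toNat := qv_val hidx hk
    rw [hs] at hk'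
    subst hk'
    simp [hk]
  have hrep : ∀ C : (G.deleteEdges E).ConnectedComponent, C.supp.Infinite →
      ∃ s ∈ verL e n E v0, (G.deleteEdges E).connectedComponentMk s = C := by
    intro C hC
    obtain ⟨u, huC, huv⟩ := supp_has_vertex hC
    obtain ⟨w⟩ := hconn.2 u v0 huv hv0
    obtain ⟨s, hs1, hs2, hs3⟩ := walk_to_S w hv0
    refine ⟨s, hmemver s hs1 hs2, ?_⟩
    rw [SimpleGraph.ConnectedComponent.mem_supp_iff] at huC
    rw [← huC]
    exact (SimpleGraph.ConnectedComponent.eq).mpr hs3.symm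
  obtain ⟨s1, hs1m, hs1C⟩ := hrep C1 hC1
  obtain ⟨s2, hs2m, hs2C⟩ := hrep C2 hC2
  obtain ⟨m, hmlt, hwit⟩ := hpairs s1 hs1m s2 hs2m
  simp only [Bool.or_eq_true] at hwit
  rcases hwit with (hp | hc1) | hc2
  · refine hne ?_
    rw [← hs1C, ← hs2C]
    exact (SimpleGraph.ConnectedComponent.eq).mpr (pathOK_sound hidx hp)
  · exact (hs1C ▸ hC1) (closedOK_sound hidx hHC hc1)
  · exact (hs2C ▸ hC2) (closedOK_sound hidx hHC hc2)

end Sound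

section Complete

variable {G : CGraph} {E : List (ℕ × ℕ)} {e : ℕ}

theorem eventually_forall_mem {β : Type} {l : List β} {P : ℕ → β → Prop}
    (h : ∀ b ∈ l, ∃ n0, ∀ n ≥ n0, P n b) : ∃ n0, ∀ n ≥ n0, ∀ b ∈ l, P n b := by
  induction l with
  | nil => exact ⟨0, by simp⟩
  | cons a l ih =>
    obtain ⟨n1, h1⟩ := h a (List.mem_cons_self)
    obtain ⟨n2, h2⟩ := ih fun b hb => h b (List.mem_cons_of_mem _ hb)
    refine ⟨max n1 n2, fun n hn b hb => ?_⟩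
    rcases List.mem_cons.mp hb with rfl | hb'
    · exact h1 n (le_trans (le_max_left _ _) hn)
    · exact h2 n (le_trans (le_max_right _ _) hn) b hb'

theorem eventually_list_all {β : Type} {l : List β} {p : ℕ → β → Bool}
    (h : ∀ b ∈ l, ∃ n0, ∀ n ≥ n0, p n b = true) :
    ∃ n0, ∀ n ≥ n0, (l.all fun b => p n b) = true := by
  obtain ⟨n0, h0⟩ := eventually_forall_mem h
  exact ⟨n0, fun n hn => List.all_eq_true.mpr (h0 n hn)⟩

theorem I_finite (hconn : G.Connected) :
    {C : (G.deleteEdges E).ConnectedComponent | C.supp.Infinite}.Finite := by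
  obtain ⟨v0, hv0⟩ := hconn.1
  have hsub : {C : (G.deleteEdges E).ConnectedComponent | C.supp.Infinite} ⊆
      (fun s => (G.deleteEdges E).connectedComponentMk s) '' {x | x ∈ v0 :: endpts E} := by
    intro C hC
    obtain ⟨u, huC, huv⟩ := supp_has_vertex hC
    obtain ⟨w⟩ := hconn.2 u v0 huv hv0
    obtain ⟨s, hs1, hs2, hs3⟩ := walk_to_S w hv0
    refine ⟨s, ?_, ?_⟩
    · rcases hs2 with rfl | h'
      · exact List.mem_cons_self
      · exact List.mem_cons_of_mem _ h'
    · rw [SimpleGraph.ConnectedComponent.mem_supp_iff] at huC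
      rw [← huC]
      exact (SimpleGraph.ConnectedComponent.eq).mpr hs3.symm
  exact Set.Finite.subset (Set.Finite.image _ (v0 :: endpts E).finite_toSet) hsub

theorem pathOK_complete (hidx : CGraph.IndexOf e G) {u v : ℕ}
    (h : (G.deleteEdges E).Reachable u v) :
    ∃ l : List ℕ, ∃ n0, ∀ n ≥ n0, pathOK e n E u v l = true := by
  obtain ⟨p⟩ := h
  refine ⟨p.support, ?_⟩
  have hch : List.Chain' (G.deleteEdges E).Adj p.support := p.isChain_adj_support
  have hhead : p.support.head? = some u := by rw [p.support_eq_cons]; rfl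
  have hlast : p.support.reverse.head? = some v := by
    rw [← SimpleGraph.Walk.support_reverse, p.reverse.support_eq_cons]; rfl
  have hadj : ∀ i, i + 1 < p.support.length →
      (G.deleteEdges E).Adj (p.support.getD i 0) (p.support.getD (i+1) 0) := by
    intro i hi
    have := List.isChain_iff_getElem.mp hch i (by omega)
    have e1 : p.support.getD i 0 = p.support.get ⟨i, by omega⟩ := by
      rw [List.getD_eq_getElem?_getD, List.getElem?_eq_getElem (by omega)]; rfl
    have e2 : p.support.getD (i+1) 0 = p.support.get ⟨i+1, by omega⟩ := by
      rw [List.getD_eq_getElem?_getD, List.getElem?_eq_getElem (by omega)]; rfl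
    rw [e1, e2]; exact this
  have hper : ∀ i ∈ List.range (p.support.length - 1), ∃ n0, ∀ n ≥ n0,
      (!(memE E (p.support.getD i 0) (p.support.getD (i+1) 0)) &&
        decide (qry e n (Nat.pair 1 (Nat.pair (p.support.getD i 0)
          (p.support.getD (i+1) 0))) = some 1)) = true := by
    intro i hi
    rw [List.mem_range] at hi
    have hadj' := hadj i (by omega)
    have hq : evalIdx e (Nat.pair 1 (Nat.pair (p.support.getD i 0) (p.support.getD (i+1) 0)))
        = Part.some 1 := by
      rw [hidx.2.1]
      rw [hadj'.1]
      rfl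
    obtain ⟨k, hk⟩ := qry_conv hq
    refine ⟨k, fun n hn => ?_⟩
    have hm : memE E (p.support.getD i 0) (p.support.getD (i+1) 0) = false := by
      rw [← Bool.not_eq_true]
      intro hc
      rcases memE_iff.mp hc with h' | h'
      · exact hadj'.2.1 h'
      · exact hadj'.2.2 h'
    rw [hm, hk n hn]
    simp
  obtain ⟨n0, hn0⟩ := eventually_list_all hper
  refine ⟨n0, fun n hn => ?_⟩
  unfold pathOK
  rw [hhead, hlast]
  simp only [decide_eq_true_eq, Bool.and_eq_true]
  exact ⟨⟨by simp, by simp⟩, by simpa using hn0 n hn⟩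

theorem closedOK_complete (hidx : CGraph.IndexOf e G) (hHC : G.HighlyComputable) {u : ℕ}
    (hfin : ((G.deleteEdges E).connectedComponentMk u).supp.Finite) :
    ∃ T : List ℕ, ∃ n0, ∀ n ≥ n0, closedOK e n E u T = true := by
  classical
  refine ⟨hfin.toFinset.toList, ?_⟩
  set T := hfin.toFinset.toList with hT
  have hmemT : ∀ x, x ∈ T ↔ x ∈ ((G.deleteEdges E).connectedComponentMk u).supp := by
    intro x; rw [hT, Finset.mem_toList, Set.Finite.mem_toFinset]
  have huT : u ∈ T := (hmemT u).mpr (by rw [SimpleGraph.ConnectedComponent.mem_supp_iff])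
  have key : ∀ t ∈ T, ∃ n0, ∀ n ≥ n0,
      (Option.casesOn (motive := fun _ => Bool) (qry e n (Nat.pair 2 t)) false fun d =>
        ((dedupL (T ++ partners E t)).all fun w =>
            (qry e n (Nat.pair 1 (Nat.pair t w))).isSome) &&
        decide (((dedupL (T ++ partners E t)).filterMap fun w =>
            cond (decide (qry e n (Nat.pair 1 (Nat.pair t w)) = some 1)) (some w) none).length
          = d)) = true := by
    intro t ht
    obtain ⟨k1, hk1⟩ := qry_conv (hidx.2.2 t)
    set W := dedupL (T ++ partners E t) with hWdef
    have hWadj : ∀ w ∈ W, ∃ n0, ∀ n ≥ n0,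
        qry e n (Nat.pair 1 (Nat.pair t w)) = some ((G.adj t w).toNat) := by
      intro w _
      exact qry_conv (hidx.2.1 t w)
    obtain ⟨k2, hk2⟩ := eventually_forall_mem hWadj
    refine ⟨max k1 k2, fun n hn => ?_⟩
    have hn1 : n ≥ k1 := le_trans (le_max_left _ _) hn
    have hn2 : n ≥ k2 := le_trans (le_max_right _ _) hn
    rw [hk1 n hn1]
    simp only [Bool.and_eq_true, List.all_eq_true, decide_eq_true_eq]
    constructor
    · intro w hw
      rw [hk2 n hn2 w hw]
      rfl
    · -- the filtered list is exactly the neighbor set of t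
      rw [filterMap_cond]
      have hcong : ∀ w ∈ W, (decide (qry e n (Nat.pair 1 (Nat.pair t w)) = some 1))
          = G.adj t w := by
        intro w hw
        rw [hk2 n hn2 w hw]
        cases hga : G.adj t w <;> simp [hga]
      rw [List.filter_congr hcong]
      -- membership: W.filter (G.adj t) has the same elements as the neighbor set
      have hNsub : ∀ x, x ∈ G.neighborSet t → x ∈ W := by
        intro x hx
        have hax : G.adj t x = true := hx
        by_cases hm : (t, x) ∈ E ∨ (x, t) ∈ E
        · rw [hWdef, mem_dedupL, List.mem_append]
          exact Or.inr (mem_partners.mpr hm)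
        · push_neg at hm
          have hHadj : (G.deleteEdges E).Adj t x := ⟨hax, hm.1, hm.2⟩
          have htsupp : t ∈ ((G.deleteEdges E).connectedComponentMk u).supp := (hmemT t).mp ht
          rw [SimpleGraph.ConnectedComponent.mem_supp_iff] at htsupp
          have hxsupp : x ∈ ((G.deleteEdges E).connectedComponentMk u).supp := by
            rw [SimpleGraph.ConnectedComponent.mem_supp_iff, ← htsupp]
            exact (SimpleGraph.ConnectedComponent.eq).mpr hHadj.symm.reachable
          rw [hWdef, mem_dedupL, List.mem_append]
          exact Or.inl ((hmemT x).mpr hxsupp)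
      set L := W.filter (fun w => G.adj t w) with hLdef
      have hLnd : L.Nodup := (dedupL_nodup _).filter _
      have hLset : (L.toFinset : Set ℕ) = G.neighborSet t := by
        ext x
        simp only [List.coe_toFinset, Set.mem_setOf_eq, hLdef, List.mem_filter]
        constructor
        · rintro ⟨_, hx⟩; exact hx
        · intro hx; exact ⟨hNsub x hx, hx⟩
      have : (G.degree t) = L.length := by
        rw [CGraph.degree, ← hLset, Set.ncard_coe_finset, List.toFinset_card_of_nodup hLnd]
      exact this.symm
  obtain ⟨n0, hn0⟩ := eventually_forall_mem key
  refine ⟨n0, fun n hn => ?_⟩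
  unfold closedOK
  simp only [Bool.and_eq_true]
  constructor
  · exact List.any_eq_true.mpr ⟨u, huT, by simp⟩
  · exact List.all_eq_true.mpr (hn0 n hn)

theorem check_complete (hidx : CGraph.IndexOf e G) (hHC : G.HighlyComputable)
    (hconn : G.Connected) (h : ¬ 2 ≤ G.comp E) : ∃ n, check e E n = true := by
  classical
  obtain ⟨v0, hv0⟩ := hconn.1
  have hIfin := I_finite (E := E) hconn
  have hle1 : {C : (G.deleteEdges E).ConnectedComponent | C.supp.Infinite}.ncard ≤ 1 := by
    have : ¬ 2 ≤ {C : (G.deleteEdges E).ConnectedComponent | C.supp.Infinite}.ncard := h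
    omega
  have hsub : ∀ C1 C2 : (G.deleteEdges E).ConnectedComponent,
      C1.supp.Infinite → C2.supp.Infinite → C1 = C2 := by
    intro C1 C2 h1 h2
    exact (Set.ncard_le_one hIfin).mp hle1 C1 h1 C2 h2
  have hvq : ∀ w ∈ v0 :: endpts E, ∃ n0, ∀ n ≥ n0,
      qry e n (Nat.pair 0 w) = some ((G.verts w).toNat) := fun w _ => qry_conv (hidx.1 w)
  obtain ⟨k0, hk0⟩ := eventually_forall_mem hvq
  set Sl := (v0 :: endpts E).filter (fun w => G.verts w) with hSl
  have hverL : ∀ n ≥ k0, verL e n E v0 = Sl := by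
    intro n hn
    unfold verL
    rw [filterMap_cond]
    refine List.filter_congr ?_
    intro w hw
    rw [hk0 n hn w hw]
    cases hgw : G.verts w <;> simp [hgw]
  have hpair : ∀ u ∈ Sl, ∀ v ∈ Sl, ∃ n0, ∀ n ≥ n0,
      ((List.range (n+1)).any fun m =>
        pathOK e n E u v (Denumerable.ofNat (List ℕ) m) ||
        closedOK e n E u (Denumerable.ofNat (List ℕ) m) ||
        closedOK e n E v (Denumerable.ofNat (List ℕ) m)) = true := by
    intro u _ v _
    have witness : ∃ l : List ℕ, ∃ n0, ∀ n ≥ n0,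
        (pathOK e n E u v l || closedOK e n E u l || closedOK e n E v l) = true := by
      by_cases hcu : ((G.deleteEdges E).connectedComponentMk u).supp.Infinite
      · by_cases hcv : ((G.deleteEdges E).connectedComponentMk v).supp.Infinite
        · have hcc := hsub _ _ hcu hcv
          have hr : (G.deleteEdges E).Reachable u v :=
            (SimpleGraph.ConnectedComponent.eq).mp hcc
          obtain ⟨l, n0, hl⟩ := pathOK_complete hidx hr
          exact ⟨l, n0, fun n hn => by rw [hl n hn]; simp⟩
        · obtain ⟨T, n0, hT⟩ := closedOK_complete hidx hHC (Set.not_infinite.mp hcv)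
          exact ⟨T, n0, fun n hn => by rw [hT n hn]; simp⟩
      · obtain ⟨T, n0, hT⟩ := closedOK_complete hidx hHC (Set.not_infinite.mp hcu)
        exact ⟨T, n0, fun n hn => by rw [hT n hn]; simp⟩
    obtain ⟨l, n0, hl⟩ := witness
    refine ⟨max n0 (Encodable.encode l), fun n hn => List.any_eq_true.mpr
      ⟨Encodable.encode l, ?_, ?_⟩⟩
    · rw [List.mem_range]
      have : Encodable.encode l ≤ n := le_trans (le_max_right _ _) hn
      omega
    · rw [Denumerable.ofNat_encode]
      exact hl n (le_trans (le_max_left _ _) hn)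
  have hallpairs : ∃ n1, ∀ n ≥ n1, (Sl.all fun u => Sl.all fun v =>
      (List.range (n+1)).any fun m =>
        pathOK e n E u v (Denumerable.ofNat (List ℕ) m) ||
        closedOK e n E u (Denumerable.ofNat (List ℕ) m) ||
        closedOK e n E v (Denumerable.ofNat (List ℕ) m)) = true := by
    refine eventually_list_all ?_
    intro u hu
    refine eventually_list_all ?_
    intro v hv
    exact hpair u hu v hv
  obtain ⟨n1, hn1⟩ := hallpairs
  refine ⟨max (max k0 n1) v0, ?_⟩
  set N := max (max k0 n1) v0 with hN
  have hNk0 : k0 ≤ N := le_trans (le_max_left _ _) (le_max_left _ _)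
  have hNn1 : n1 ≤ N := le_trans (le_max_right _ _) (le_max_left _ _)
  have hNv0 : v0 ≤ N := le_max_right _ _
  unfold check
  refine List.any_eq_true.mpr ⟨v0, ?_, ?_⟩
  · rw [List.mem_range]; omega
  · simp only [Bool.and_eq_true, decide_eq_true_eq, List.all_eq_true]
    refine ⟨⟨?_, ?_⟩, ?_⟩
    · rw [hk0 N hNk0 v0 (List.mem_cons_self), hv0]; rfl
    · intro w hw
      rw [hk0 N hNk0 w hw]
      rfl
    · rw [hverL N hNk0]
      have := hn1 N hNn1
      rw [List.all_eq_true] at this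
      intro a ha
      have := this a ha
      rw [List.all_eq_true] at this
      exact this
  
end Complete

end Stmt3

/-- There is an algorithm which, on input an index for a connected highly
computable graph `G` and a finite edge set `E`, halts iff `E ∉ Sep(G)`: membership in `Sep(G)`,
uniformly in a description of `G`, is a `Π⁰₁` problem. -/
theorem stmt_3 :
    ∃ F : ℕ × List (ℕ × ℕ) →. Unit, Partrec F ∧
      ∀ (e : ℕ) (G : CGraph), CGraph.IndexOf e G → G.HighlyComputable → G.Connected →
        ∀ E : List (ℕ × ℕ), (F (e, E)).Dom ↔ E ∉ G.Sep := by
  classical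
  refine ⟨fun x => Nat.rfindOpt fun n => cond (Stmt3.check x.1 x.2 n) (some ()) none, ?_, ?_⟩
  · apply Partrec.rfindOpt
    have hpr : Primrec fun p : (ℕ × List (ℕ × ℕ)) × ℕ =>
        cond (Stmt3.check p.1.1 p.1.2 p.2) (some ()) (none : Option Unit) :=
      Primrec.cond Stmt3.check_pr (Primrec.const (some ())) (Primrec.const none)
    exact Primrec₂.to_comp (Primrec₂.mk hpr)
  · intro e G hidx hHC hconn E
    rw [Nat.rfindOpt_dom]
    constructor
    · rintro ⟨n, a, ha⟩ hmem
      refine Stmt3.check_sound hidx hHC hconn (n := n) ?_ hmem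
      by_contra hc
      rw [Bool.not_eq_true] at hc
      rw [hc] at ha
      exact (Option.not_mem_none a) ha
    · intro hE
      obtain ⟨n, hc⟩ := Stmt3.check_complete hidx hHC hconn hE
      refine ⟨n, (), ?_⟩
      rw [hc]
      rfl
end

section
/- There is a uniformly highly computable sequence (G_e)_{e∈ℕ} of graphs, each of which is a tree with exactly two ends, such that: (1) the set {e ∈ ℕ : the single edge {0,1} belongs to Sep(G_e)} is Π⁰₁-complete; and (2) every function f with f(e) ∈ Sep(G_e) for all e ∈ ℕ satisfies f ≥_T ∅', i.e., f computes the halting set. -/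
set_option linter.unreachableTactic false
set_option linter.unusedTactic false

section GeneralGraph
open SimpleGraph

variable (H : SimpleGraph ℕ)

lemma side_invariant {s : ℕ → Bool} (hs : ∀ u v, H.Adj u v → s u = s v)
    {a b : ℕ} (h : H.Reachable a b) : s a = s b := by
  obtain ⟨w⟩ := h
  induction w with
  | nil => rfl
  | cons h p ih => exact (hs _ _ h).trans ih

lemma side_separates (s : ℕ → Bool) (hs : ∀ u v, H.Adj u v → s u = s v)
    {a c : ℕ} (hac : s a ≠ s c) :
    H.connectedComponentMk a ≠ H.connectedComponentMk c := fun he =>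
  hac (side_invariant H hs (SimpleGraph.ConnectedComponent.exact he))

lemma chain_reachable (r : ℕ → ℕ) (a : ℕ) :
    ∀ c, a ≤ c → (∀ k, a ≤ k → k < c → H.Adj (r k) (r (k + 1))) →
      H.Reachable (r a) (r c) := by
  intro c
  induction c with
  | zero => intro h _; cases Nat.le_zero.mp h; rfl
  | succ c ih =>
    intro hac hadj
    rcases Nat.lt_or_ge a (c + 1) with h | h
    · have hac' : a ≤ c := Nat.lt_succ_iff.mp h
      exact (ih hac' (fun k hk hk' => hadj k hk (Nat.lt_succ_of_lt hk'))).trans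
        (hadj c hac' (Nat.lt_succ_self c)).reachable
    · have : a = c + 1 := le_antisymm hac h
      subst this; rfl

lemma tail_supp_infinite (r : ℕ → ℕ) (hinj : Function.Injective r) (N : ℕ)
    (hr : ∀ k, N ≤ k → H.Adj (r k) (r (k + 1))) :
    (H.connectedComponentMk (r N)).supp.Infinite := by
  have hsub : r '' Set.Ici N ⊆ (H.connectedComponentMk (r N)).supp := by
    rintro _ ⟨k, hk, rfl⟩
    have : H.Reachable (r N) (r k) :=
      chain_reachable H r N k hk (fun j hj _ => hr j hj)
    simpa [ConnectedComponent.mem_supp_iff] using (ConnectedComponent.sound this.symm)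
  exact Set.Infinite.mono hsub ((Set.Ici_infinite N).image (Set.injOn_of_injective hinj))

lemma infinite_comps_subset (r₁ r₂ : ℕ → ℕ) (N : ℕ)
    (h₁ : ∀ k, N ≤ k → H.Adj (r₁ k) (r₁ (k + 1)))
    (h₂ : ∀ k, N ≤ k → H.Adj (r₂ k) (r₂ (k + 1)))
    (hcov : ∀ v : ℕ, (∃ k, r₁ k = v) ∨ (∃ k, r₂ k = v)) :
    {C : H.ConnectedComponent | C.supp.Infinite} ⊆
      {H.connectedComponentMk (r₁ N), H.connectedComponentMk (r₂ N)} := by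
  intro C hC
  have hfin : (r₁ '' Set.Iio N ∪ r₂ '' Set.Iio N).Finite :=
    ((Set.finite_Iio N).image r₁).union ((Set.finite_Iio N).image r₂)
  obtain ⟨v, hv, hv'⟩ := hC.exists_notMem_finite hfin
  have hvC : H.connectedComponentMk v = C := hv
  rcases hcov v with ⟨k, rfl⟩ | ⟨k, rfl⟩
  · have hk : N ≤ k := by
      by_contra h
      exact hv' (Or.inl ⟨k, Set.mem_Iio.mpr (by omega), rfl⟩)
    left
    rw [← hvC]
    exact (ConnectedComponent.sound
      (chain_reachable H r₁ N k hk (fun j hj _ => h₁ j hj))).symm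
  · have hk : N ≤ k := by
      by_contra h
      exact hv' (Or.inr ⟨k, Set.mem_Iio.mpr (by omega), rfl⟩)
    right
    rw [← hvC]
    exact (ConnectedComponent.sound
      (chain_reachable H r₂ N k hk (fun j hj _ => h₂ j hj))).symm

end GeneralGraph

open SimpleGraph in
lemma acyclic_of_level (H : SimpleGraph ℕ) (l : ℕ → ℤ)
    (hdiff : ∀ u v, H.Adj u v → l u = l v + 1 ∨ l v = l u + 1)
    (huniq : ∀ v u w, H.Adj v u → H.Adj v w → l u < l v → l w < l v → u = w) :
    H.IsAcyclic := by
  intro v c hc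
  obtain ⟨x, hx, hmax⟩ : ∃ x ∈ c.support.toFinset, ∀ y ∈ c.support.toFinset, l y ≤ l x :=
    Finset.exists_max_image c.support.toFinset l
      ⟨v, List.mem_toFinset.mpr c.start_mem_support⟩
  have hx' : x ∈ c.support := List.mem_toFinset.mp hx
  have hmax' : ∀ y, y ∈ c.support → l y ≤ l x := fun y hy =>
    hmax y (List.mem_toFinset.mpr hy)
  set c' := c.rotate x hx' with hc'def
  have hc' : c'.IsCycle := hc.rotate hx'
  have hmemc' : ∀ y, y ∈ c'.support → y ∈ c.support := by
    intro y hy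
    rw [SimpleGraph.Walk.support_eq_cons] at hy
    rcases List.mem_cons.mp hy with rfl | hy
    · exact hx'
    · have := (SimpleGraph.Walk.support_rotate c x hx').mem_iff.mp hy
      rw [SimpleGraph.Walk.support_eq_cons c] at *
      exact List.mem_cons_of_mem _ this
  clear_value c'
  cases c' with
  | nil => exact hc'.ne_nil rfl
  | cons hadj p =>
    rename_i y
    -- p : H.Walk y x, hadj : H.Adj x y
    rw [SimpleGraph.Walk.cons_isCycle_iff] at hc'
    obtain ⟨hpath, hedge⟩ := hc'
    have hyx : y ≠ x := fun h => H.loopless.irrefl x (h ▸ hadj)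
    obtain ⟨w, hxw, r, hr⟩ := SimpleGraph.Walk.exists_eq_cons_of_ne
      (fun h => hyx h.symm) p.reverse
    -- p.reverse : Walk x y = cons hxw r, r : Walk w y
    have hyc : y ∈ c.support := by
      apply hmemc'
      rw [SimpleGraph.Walk.support_cons]
      exact List.mem_cons_of_mem _ p.start_mem_support
    have hwc : w ∈ c.support := by
      apply hmemc'
      have hwp : w ∈ p.support := by
        have h1 : w ∈ p.reverse.support := by
          rw [hr, SimpleGraph.Walk.support_cons]
          exact List.mem_cons_of_mem _ r.start_mem_support
        simpa [SimpleGraph.Walk.support_reverse] using h1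
      rw [SimpleGraph.Walk.support_cons]
      exact List.mem_cons_of_mem _ hwp
    have hly : l y < l x := by
      rcases hdiff x y hadj with h | h
      · omega
      · have := hmax' y hyc; omega
    have hlw : l w < l x := by
      rcases hdiff x w hxw with h | h
      · omega
      · have := hmax' w hwc; omega
    have hyw : y = w := huniq x y w hadj hxw hly hlw
    subst hyw
    -- now p = r.reverse.concat hxw.symm and r : Walk y y
    have hp : p = r.reverse.concat hxw.symm := by
      have := congrArg SimpleGraph.Walk.reverse hr
      simpa [SimpleGraph.Walk.reverse_cons, SimpleGraph.Walk.concat_eq_append] using this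
    rw [hp, SimpleGraph.Walk.concat_eq_append] at hpath
    have hrpath : r.reverse.IsPath := hpath.of_append_left
    have : r.reverse = SimpleGraph.Walk.nil := (SimpleGraph.Walk.isPath_iff_eq_nil).mp hrpath
    have hrnil : r = SimpleGraph.Walk.nil := by
      have := congrArg SimpleGraph.Walk.reverse this
      simpa using this
    have hlenrot : (c.rotate x hx').length = c.length := by
      rw [SimpleGraph.Walk.rotate, SimpleGraph.Walk.length_append]
      conv_rhs => rw [← SimpleGraph.Walk.take_spec c hx']
      rw [SimpleGraph.Walk.length_append]
      omega
    have hlen := hc.three_le_length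
    have hplen : p.length = 1 := by
      have : p.reverse.length = 1 := by rw [hr, hrnil]; rfl
      simpa using this
    have := congrArg SimpleGraph.Walk.length hc'def
    simp [SimpleGraph.Walk.length_cons, hplen, hlenrot] at this
    omega
/-! ### The tree construction -/

/-- Adjacency function of the tree `G_b`, parametrized by a Boolean flag sequence `b`. -/
def adjB (b : ℕ → Bool) (u v : ℕ) : Bool :=
  (decide (min u v = 0 ∧ max u v = 1)) ||
  (decide (max u v = min u v + 2 ∧ min u v % 2 = 1)) ||
  ((decide (max u v = min u v + 2 ∧ min u v % 2 = 0)) && !(b (min u v / 2))) ||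
  ((decide (max u v = min u v + 1 ∧ min u v % 2 = 1)) && b (min u v / 2))

lemma adjB_iff (b : ℕ → Bool) (u v : ℕ) : adjB b u v = true ↔
    ((u = 0 ∧ v = 1) ∨ (u = 1 ∧ v = 0)) ∨
    (∃ k, (u = 2*k+1 ∧ v = 2*k+3) ∨ (v = 2*k+1 ∧ u = 2*k+3)) ∨
    (∃ k, b k = false ∧ ((u = 2*k ∧ v = 2*k+2) ∨ (v = 2*k ∧ u = 2*k+2))) ∨
    (∃ k, b k = true ∧ ((u = 2*k+1 ∧ v = 2*k+2) ∨ (v = 2*k+1 ∧ u = 2*k+2))) := by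
  simp only [adjB, Bool.or_eq_true, Bool.and_eq_true, decide_eq_true_eq, Bool.not_eq_true']
  constructor
  · rintro (((h | h) | ⟨h, hb⟩) | ⟨h, hb⟩)
    · left; omega
    · refine Or.inr (Or.inl ⟨min u v / 2, ?_⟩); omega
    · refine Or.inr (Or.inr (Or.inl ⟨min u v / 2, ?_, ?_⟩))
      · exact hb
      · omega
    · refine Or.inr (Or.inr (Or.inr ⟨min u v / 2, hb, ?_⟩)); omega
  · rintro ((⟨rfl, rfl⟩ | ⟨rfl, rfl⟩) | ⟨k, (⟨rfl, rfl⟩ | ⟨rfl, rfl⟩)⟩ |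
      ⟨k, hb, (⟨rfl, rfl⟩ | ⟨rfl, rfl⟩)⟩ | ⟨k, hb, (⟨rfl, rfl⟩ | ⟨rfl, rfl⟩)⟩)
    · exact Or.inl (Or.inl (Or.inl (by omega)))
    · exact Or.inl (Or.inl (Or.inl (by omega)))
    · exact Or.inl (Or.inl (Or.inr (by omega)))
    · exact Or.inl (Or.inl (Or.inr (by omega)))
    · refine Or.inl (Or.inr ⟨by omega, ?_⟩)
      have : min (2*k) (2*k+2) / 2 = k := by omega
      rw [this]; exact hb
    · refine Or.inl (Or.inr ⟨by omega, ?_⟩)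
      have : min (2*k+2) (2*k) / 2 = k := by omega
      rw [this]; exact hb
    · refine Or.inr ⟨by omega, ?_⟩
      have : min (2*k+1) (2*k+2) / 2 = k := by omega
      rw [this]; exact hb
    · refine Or.inr ⟨by omega, ?_⟩
      have : min (2*k+2) (2*k+1) / 2 = k := by omega
      rw [this]; exact hb

/-- The tree graph determined by the flag sequence `b`. -/
def Gb (b : ℕ → Bool) : CGraph where
  verts := fun _ => true
  adj := adjB b
  symm := by
    intro u v
    unfold adjB
    rw [min_comm, max_comm]
  loopless := by
    intro v
    rw [← Bool.not_eq_true, adjB_iff]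
    push_neg
    refine ⟨⟨by omega, by omega⟩, fun k => by omega, fun k _ => by omega, fun k _ => by omega⟩
  adj_verts := fun _ _ _ => ⟨rfl, rfl⟩

lemma Gb_adj_iff (b : ℕ → Bool) (u v : ℕ) : (Gb b).toSimpleGraph.Adj u v ↔ adjB b u v = true :=
  Iff.rfl

/-! ### Neighborhoods and degrees of `Gb` -/

lemma bool_to_false {x : Bool} (h : ¬x = true) : x = false := by
  cases x
  · rfl
  · exact absurd rfl h

lemma bool_ne_of_ft {b : ℕ → Bool} {k m : ℕ} (hk : b k = false) (hm : b m = true) : k ≠ m := by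
  intro h; subst h; rw [hm] at hk; exact Bool.noConfusion hk

/-- Explicit neighborhood finsets. -/
def nbr (b : ℕ → Bool) (v : ℕ) : Finset ℕ :=
  if v = 0 then (if b 0 then {1} else {1, 2})
  else if v % 2 = 1 then (if b (v / 2) then {v - 2, v + 2, v + 1} else {v - 2, v + 2})
  else (if b (v / 2) then ∅ else {v + 2}) ∪ (if b (v / 2 - 1) then {v - 1} else {v - 2})

/-- Explicit degree function. -/
def degB (b : ℕ → Bool) (v : ℕ) : ℕ :=
  if v = 0 then (if b 0 then 1 else 2)
  else if v % 2 = 1 then (if b (v / 2) then 3 else 2)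
  else (if b (v / 2) then 1 else 2)

lemma mem_nbr_zero (b : ℕ → Bool) (u : ℕ) :
    adjB b 0 u = true ↔ u ∈ nbr b 0 := by
  rw [adjB_iff, nbr, if_pos rfl]
  by_cases hb : b 0 = true
  · rw [if_pos hb]
    simp only [Finset.mem_singleton]
    constructor
    · rintro ((⟨h1, h2⟩ | ⟨h1, h2⟩) | ⟨k, (⟨h1, h2⟩ | ⟨h1, h2⟩)⟩ |
        ⟨k, hk, (⟨h1, h2⟩ | ⟨h1, h2⟩)⟩ | ⟨k, hk, (⟨h1, h2⟩ | ⟨h1, h2⟩)⟩) <;>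
        first
          | omega
          | (have := bool_ne_of_ft hk hb; omega)
    · intro h
      exact Or.inl (Or.inl ⟨by first | trivial | omega, by first | trivial | omega⟩)
  · have hb' := bool_to_false hb
    rw [if_neg hb]
    simp only [Finset.mem_insert, Finset.mem_singleton]
    constructor
    · rintro ((⟨h1, h2⟩ | ⟨h1, h2⟩) | ⟨k, (⟨h1, h2⟩ | ⟨h1, h2⟩)⟩ |
        ⟨k, hk, (⟨h1, h2⟩ | ⟨h1, h2⟩)⟩ | ⟨k, hk, (⟨h1, h2⟩ | ⟨h1, h2⟩)⟩) <;> omega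
    · rintro (h | h)
      · exact Or.inl (Or.inl ⟨by first | trivial | omega, by first | trivial | omega⟩)
      · refine Or.inr (Or.inr (Or.inl ⟨0, hb', Or.inl ⟨by first | trivial | omega, by first | trivial | omega⟩⟩))

lemma mem_nbr_odd (b : ℕ → Bool) (m u : ℕ) :
    adjB b (2 * m + 1) u = true ↔ u ∈ nbr b (2 * m + 1) := by
  rw [adjB_iff, nbr, if_neg (by omega), if_pos (by omega)]
  have hd : (2 * m + 1) / 2 = m := by omega
  rw [hd]
  by_cases hb : b m = true
  · rw [if_pos hb]
    simp only [Finset.mem_insert, Finset.mem_singleton]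
    constructor
    · rintro ((⟨h1, h2⟩ | ⟨h1, h2⟩) | ⟨k, (⟨h1, h2⟩ | ⟨h1, h2⟩)⟩ |
        ⟨k, hk, (⟨h1, h2⟩ | ⟨h1, h2⟩)⟩ | ⟨k, hk, (⟨h1, h2⟩ | ⟨h1, h2⟩)⟩) <;>
        first
          | omega
          | (have := bool_ne_of_ft hk hb; omega)
    · rintro (h | h | h)
      · rcases Nat.eq_zero_or_pos m with rfl | hm0
        · exact Or.inl (Or.inr ⟨by first | trivial | omega, by first | trivial | omega⟩)
        · exact Or.inr (Or.inl ⟨m - 1, Or.inr ⟨by first | trivial | omega, by first | trivial | omega⟩⟩)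
      · exact Or.inr (Or.inl ⟨m, Or.inl ⟨by first | trivial | omega, by first | trivial | omega⟩⟩)
      · exact Or.inr (Or.inr (Or.inr ⟨m, hb, Or.inl ⟨by first | trivial | omega, by first | trivial | omega⟩⟩))
  · have hb' := bool_to_false hb
    rw [if_neg hb]
    simp only [Finset.mem_insert, Finset.mem_singleton]
    constructor
    · rintro ((⟨h1, h2⟩ | ⟨h1, h2⟩) | ⟨k, (⟨h1, h2⟩ | ⟨h1, h2⟩)⟩ |
        ⟨k, hk, (⟨h1, h2⟩ | ⟨h1, h2⟩)⟩ | ⟨k, hk, (⟨h1, h2⟩ | ⟨h1, h2⟩)⟩) <;>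
        first
          | omega
          | (have := bool_ne_of_ft hb' hk; omega)
    · rintro (h | h)
      · rcases Nat.eq_zero_or_pos m with rfl | hm0
        · exact Or.inl (Or.inr ⟨by first | trivial | omega, by first | trivial | omega⟩)
        · exact Or.inr (Or.inl ⟨m - 1, Or.inr ⟨by first | trivial | omega, by first | trivial | omega⟩⟩)
      · exact Or.inr (Or.inl ⟨m, Or.inl ⟨by first | trivial | omega, by first | trivial | omega⟩⟩)

lemma mem_nbr_even (b : ℕ → Bool) (m u : ℕ) (hm : 1 ≤ m) :
    adjB b (2 * m) u = true ↔ u ∈ nbr b (2 * m) := by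
  rw [adjB_iff, nbr, if_neg (by omega), if_neg (by omega)]
  have hd : (2 * m) / 2 = m := by omega
  rw [hd]
  simp only [Finset.mem_union]
  constructor
  · rintro ((⟨h1, h2⟩ | ⟨h1, h2⟩) | ⟨k, (⟨h1, h2⟩ | ⟨h1, h2⟩)⟩ |
      ⟨k, hk, (⟨h1, h2⟩ | ⟨h1, h2⟩)⟩ | ⟨k, hk, (⟨h1, h2⟩ | ⟨h1, h2⟩)⟩)
    · omega
    · omega
    · omega
    · omega
    · -- v = 2k, u = 2k+2, b k false : k = m, so u = 2m+2
      left
      have hkm : k = m := by omega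
      subst hkm
      rw [if_neg (by rw [hk]; simp)]
      simp only [Finset.mem_singleton]; omega
    · -- u = 2k, v = 2k+2, b k false : k = m-1, u = 2m-2
      right
      have hkm : k = m - 1 := by omega
      subst hkm
      rw [if_neg (by rw [hk]; simp)]
      simp only [Finset.mem_singleton]; omega
    · -- v = 2k+1 : impossible, v even
      omega
    · -- u = 2k+1, v = 2k+2, b k true : k = m-1, u = 2m-1
      right
      have hkm : k = m - 1 := by omega
      subst hkm
      rw [if_pos hk]
      simp only [Finset.mem_singleton]; omega
  · rintro (h | h)
    · by_cases hb : b m = true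
      · rw [if_pos hb] at h; exact absurd h (Finset.notMem_empty u)
      · rw [if_neg hb] at h
        simp only [Finset.mem_singleton] at h
        exact Or.inr (Or.inr (Or.inl ⟨m, bool_to_false hb, Or.inl ⟨by first | trivial | omega, by first | trivial | omega⟩⟩))
    · by_cases hb : b (m - 1) = true
      · rw [if_pos hb] at h
        simp only [Finset.mem_singleton] at h
        exact Or.inr (Or.inr (Or.inr ⟨m - 1, hb, Or.inr ⟨by first | trivial | omega, by first | trivial | omega⟩⟩))
      · rw [if_neg hb] at h
        simp only [Finset.mem_singleton] at h
        exact Or.inr (Or.inr (Or.inl ⟨m - 1, bool_to_false hb, Or.inr ⟨by first | trivial | omega, by first | trivial | omega⟩⟩))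

lemma mem_nbr (b : ℕ → Bool) (v u : ℕ) : adjB b v u = true ↔ u ∈ nbr b v := by
  rcases Nat.eq_zero_or_pos v with rfl | hv
  · exact mem_nbr_zero b u
  · rcases Nat.even_or_odd v with ⟨m, hm⟩ | ⟨m, hm⟩
    · have : v = 2 * m := by omega
      subst this
      exact mem_nbr_even b m u (by omega)
    · have : v = 2 * m + 1 := by omega
      subst this
      exact mem_nbr_odd b m u

lemma neighborSet_eq (b : ℕ → Bool) (v : ℕ) :
    (Gb b).neighborSet v = ↑(nbr b v) := by
  ext u
  simp only [CGraph.neighborSet, Set.mem_setOf_eq, Finset.coe_sort_coe, Finset.mem_coe]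
  exact mem_nbr b v u

lemma nbr_card (b : ℕ → Bool) (v : ℕ) : (nbr b v).card = degB b v := by
  rcases Nat.eq_zero_or_pos v with rfl | hv
  · rw [nbr, degB, if_pos rfl, if_pos rfl]
    by_cases hb : b 0 = true
    · rw [if_pos hb, if_pos hb]; rfl
    · rw [if_neg hb, if_neg hb]
      rw [Finset.card_insert_of_notMem (by simp), Finset.card_singleton]
  · rcases Nat.even_or_odd v with ⟨m, hm⟩ | ⟨m, hm⟩
    · have hveq : v = 2 * m := by omega
      subst hveq
      have hm1 : 1 ≤ m := by omega
      rw [nbr, degB, if_neg (show ¬(2 * m = 0) by omega), if_neg (show ¬(2 * m = 0) by omega),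
        if_neg (show ¬(2 * m % 2 = 1) by omega), if_neg (show ¬(2 * m % 2 = 1) by omega)]
      have hd : (2 * m) / 2 = m := by omega
      rw [hd]
      by_cases hb : b m = true
      · rw [if_pos hb, if_pos hb, Finset.empty_union]
        by_cases hb1 : b (m - 1) = true
        · rw [if_pos hb1]; rfl
        · rw [if_neg hb1]; rfl
      · rw [if_neg hb, if_neg hb]
        by_cases hb1 : b (m - 1) = true
        · rw [if_pos hb1, Finset.card_union_of_disjoint (by simp <;> omega)]; rfl
        · rw [if_neg hb1, Finset.card_union_of_disjoint (by simp <;> omega)]; rfl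
    · have hveq : v = 2 * m + 1 := by omega
      subst hveq
      rw [nbr, degB, if_neg (show ¬(2 * m + 1 = 0) by omega),
        if_neg (show ¬(2 * m + 1 = 0) by omega), if_pos (show (2 * m + 1) % 2 = 1 by omega),
        if_pos (show (2 * m + 1) % 2 = 1 by omega)]
      have hd : (2 * m + 1) / 2 = m := by omega
      rw [hd]
      by_cases hb : b m = true
      · rw [if_pos hb, if_pos hb]
        rw [Finset.card_insert_of_notMem (by simp <;> omega),
          Finset.card_insert_of_notMem (by simp <;> omega), Finset.card_singleton]
      · rw [if_neg hb, if_neg hb]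
        rw [Finset.card_insert_of_notMem (by simp <;> omega), Finset.card_singleton]

lemma degree_Gb (b : ℕ → Bool) (v : ℕ) : (Gb b).degree v = degB b v := by
  rw [CGraph.degree, neighborSet_eq, Set.ncard_coe_finset, nbr_card]

lemma neighborSet_finite (b : ℕ → Bool) (v : ℕ) : ((Gb b).neighborSet v).Finite := by
  rw [neighborSet_eq]; exact (nbr b v).finite_toSet

/-! ### Levels, acyclicity and connectivity of `Gb` -/

open Classical in
/-- The level function used to prove acyclicity of `Gb`. -/
noncomputable def lB (b : ℕ → Bool) (v : ℕ) : ℤ :=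
  if v % 2 = 1 then ((v / 2 : ℕ) : ℤ)
  else if ∃ t, b t = true ∧ t < v / 2 then ((v / 2 : ℕ) : ℤ) else ((v / 2 : ℕ) : ℤ) - 1

lemma lB_odd (b : ℕ → Bool) (k : ℕ) : lB b (2 * k + 1) = (k : ℤ) := by
  rw [lB, if_pos (by omega)]
  norm_num [Nat.add_div]

lemma lB_even_pos (b : ℕ → Bool) (k : ℕ) (h : ∃ t, b t = true ∧ t < k) :
    lB b (2 * k) = (k : ℤ) := by
  have hd : 2 * k / 2 = k := by omega
  rw [lB, if_neg (by omega), hd, if_pos h]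

lemma lB_even_neg (b : ℕ → Bool) (k : ℕ) (h : ¬∃ t, b t = true ∧ t < k) :
    lB b (2 * k) = (k : ℤ) - 1 := by
  have hd : 2 * k / 2 = k := by omega
  rw [lB, if_neg (by omega), hd, if_neg h]

lemma lB_even_bounds (b : ℕ → Bool) (k : ℕ) :
    (k : ℤ) - 1 ≤ lB b (2 * k) ∧ lB b (2 * k) ≤ (k : ℤ) := by
  by_cases h : ∃ t, b t = true ∧ t < k
  · rw [lB_even_pos b k h]; omega
  · rw [lB_even_neg b k h]; omega

lemma lB_diff (b : ℕ → Bool) (u v : ℕ) (h : adjB b u v = true) :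
    lB b u = lB b v + 1 ∨ lB b v = lB b u + 1 := by
  rw [adjB_iff] at h
  have key : ∀ x y : ℕ,
      ((x = 0 ∧ y = 1) ∨ (∃ k, x = 2*k+1 ∧ y = 2*k+3) ∨
       (∃ k, b k = false ∧ x = 2*k ∧ y = 2*k+2) ∨
       (∃ k, b k = true ∧ x = 2*k+1 ∧ y = 2*k+2)) →
      lB b y = lB b x + 1 := by
    rintro x y (⟨rfl, rfl⟩ | ⟨k, rfl, rfl⟩ | ⟨k, hk, rfl, rfl⟩ | ⟨k, hk, rfl, rfl⟩)
    · have h0 : lB b 0 = -1 := by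
        have := lB_even_neg b 0 (by rintro ⟨t, _, ht⟩; omega)
        simpa using this
      have h1 : lB b 1 = 0 := by simpa using lB_odd b 0
      rw [h0, h1]; ring
    · rw [show 2*k+3 = 2*(k+1)+1 by ring, lB_odd, lB_odd]; push_cast; ring
    · by_cases hP : ∃ t, b t = true ∧ t < k
      · rw [lB_even_pos b k hP, show 2*k+2 = 2*(k+1) by ring,
          lB_even_pos b (k+1) (by obtain ⟨t, ht, hlt⟩ := hP; exact ⟨t, ht, by omega⟩)]
        push_cast; ring
      · rw [lB_even_neg b k hP, show 2*k+2 = 2*(k+1) by ring,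
          lB_even_neg b (k+1) ?_]
        · push_cast; ring
        · rintro ⟨t, ht, hlt⟩
          rcases Nat.lt_or_ge t k with h' | h'
          · exact hP ⟨t, ht, h'⟩
          · have : t = k := by omega
            subst this
            rw [ht] at hk; exact Bool.noConfusion hk
    · rw [lB_odd, show 2*k+2 = 2*(k+1) by ring,
        lB_even_pos b (k+1) ⟨k, hk, by omega⟩]
      push_cast; ring
  rcases h with (h | h) | ⟨k, (h | h)⟩ | ⟨k, hk, (h | h)⟩ | ⟨k, hk, (h | h)⟩
  · right; exact key u v (Or.inl h)
  · left; exact key v u (Or.inl ⟨h.2, h.1⟩)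
  · right; exact key u v (Or.inr (Or.inl ⟨k, h⟩))
  · left; exact key v u (Or.inr (Or.inl ⟨k, h⟩))
  · right; exact key u v (Or.inr (Or.inr (Or.inl ⟨k, hk, h⟩)))
  · left; exact key v u (Or.inr (Or.inr (Or.inl ⟨k, hk, h⟩)))
  · right; exact key u v (Or.inr (Or.inr (Or.inr ⟨k, hk, h⟩)))
  · left; exact key v u (Or.inr (Or.inr (Or.inr ⟨k, hk, h⟩)))

lemma lB_lower_unique (b : ℕ → Bool) (v u : ℕ) (hadj : adjB b v u = true)
    (hlow : lB b u < lB b v) :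
    u = (if v % 2 = 1 then v - 2 else (if b (v / 2 - 1) then v - 1 else v - 2)) := by
  rw [mem_nbr] at hadj
  rcases Nat.eq_zero_or_pos v with rfl | hv
  · -- v = 0 : no lower neighbors
    exfalso
    have h0 : lB b 0 = -1 := by
      have := lB_even_neg b 0 (by rintro ⟨t, _, ht⟩; omega)
      simpa using this
    rw [nbr, if_pos rfl] at hadj
    have hu : u = 1 ∨ u = 2 := by
      by_cases hb : b 0 = true
      · rw [if_pos hb] at hadj; simp at hadj; omega
      · rw [if_neg hb] at hadj; simp at hadj; omega
    rcases hu with rfl | rfl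
    · rw [show (1:ℕ) = 2*0+1 by rfl, lB_odd] at hlow; rw [h0] at hlow; omega
    · have := (lB_even_bounds b 1).1
      rw [show (2:ℕ) = 2*1 by rfl] at hlow
      rw [h0] at hlow; omega
  · rcases Nat.even_or_odd v with ⟨m, hm⟩ | ⟨m, hm⟩
    · -- v = 2m, m ≥ 1
      have hveq : v = 2 * m := by omega
      subst hveq
      have hm1 : 1 ≤ m := by omega
      rw [if_neg (show ¬(2 * m % 2 = 1) by omega)]
      have hd : 2 * m / 2 = m := by omega
      rw [hd]
      rw [nbr, if_neg (by omega), if_neg (show ¬(2 * m % 2 = 1) by omega), hd] at hadj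
      rcases Finset.mem_union.mp hadj with h | h
      · -- u = v + 2 : not lower
        exfalso
        have hu : u = 2 * m + 2 := by
          by_cases hb : b m = true
          · rw [if_pos hb] at h; exact absurd h (Finset.notMem_empty u)
          · rw [if_neg hb] at h; simpa using h
        subst hu
        have h1 := (lB_even_bounds b (m + 1)).1
        have h2 := (lB_even_bounds b m).2
        rw [show 2*m+2 = 2*(m+1) by ring] at hlow
        omega
      · by_cases hb : b (m - 1) = true
        · rw [if_pos hb] at h ⊢; simpa using h
        · rw [if_neg hb] at h ⊢; simpa using h
    · -- v = 2m+1
      have hveq : v = 2 * m + 1 := by omega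
      subst hveq
      rw [if_pos (by omega)]
      rw [nbr, if_neg (by omega), if_pos (by omega),
        show (2 * m + 1) / 2 = m by omega] at hadj
      have hlv : lB b (2 * m + 1) = (m : ℤ) := lB_odd b m
      have hne2 : u ≠ 2 * m + 3 := by
        intro h; subst h
        rw [show 2*m+3 = 2*(m+1)+1 by ring, lB_odd, hlv] at hlow; omega
      have hne1 : u ≠ 2 * m + 2 := by
        intro h; subst h
        have h1 := (lB_even_bounds b (m + 1)).1
        rw [show 2*m+2 = 2*(m+1) by ring] at hlow
        rw [hlv] at hlow; omega
      by_cases hb : b m = true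
      · rw [if_pos hb] at hadj
        simp only [Finset.mem_insert, Finset.mem_singleton] at hadj
        rcases hadj with h | h | h
        · exact h
        · exact absurd h hne2
        · exact absurd h hne1
      · rw [if_neg hb] at hadj
        simp only [Finset.mem_insert, Finset.mem_singleton] at hadj
        rcases hadj with h | h
        · exact h
        · exact absurd h hne2

lemma Gb_acyclic (b : ℕ → Bool) : (Gb b).toSimpleGraph.IsAcyclic := by
  apply acyclic_of_level _ (lB b)
  · intro u v h
    exact lB_diff b u v h
  · intro v u w hu hw hlu hlw
    rw [lB_lower_unique b v u hu hlu, lB_lower_unique b v w hw hlw]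

lemma Gb_reach0 (b : ℕ → Bool) : ∀ v, (Gb b).toSimpleGraph.Reachable 0 v := by
  intro v
  induction v using Nat.strong_induction_on with
  | _ v ih =>
    rcases Nat.lt_or_ge v 2 with hv | hv
    · interval_cases v
      · exact SimpleGraph.Reachable.refl 0
      · exact SimpleGraph.Adj.reachable
          (show adjB b 0 1 = true from (adjB_iff b 0 1).mpr (Or.inl (Or.inl ⟨rfl, rfl⟩)))
    · rcases Nat.even_or_odd v with ⟨m, hm⟩ | ⟨m, hm⟩
      · -- v = 2m, m ≥ 1
        have hveq : v = 2 * m := by omega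
        subst hveq
        by_cases hb : b (m - 1) = true
        · have hadj : adjB b (2 * (m-1) + 1) (2 * m) = true :=
            (adjB_iff _ _ _).mpr (Or.inr (Or.inr (Or.inr ⟨m - 1, hb,
              Or.inl ⟨rfl, by omega⟩⟩)))
          exact (ih (2 * (m-1) + 1) (by omega)).trans (SimpleGraph.Adj.reachable (hadj : (Gb b).toSimpleGraph.Adj _ _))
        · have hadj : adjB b (2 * (m-1)) (2 * m) = true :=
            (adjB_iff _ _ _).mpr (Or.inr (Or.inr (Or.inl ⟨m - 1, bool_to_false hb,
              Or.inl ⟨rfl, by omega⟩⟩)))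
          exact (ih (2 * (m-1)) (by omega)).trans (SimpleGraph.Adj.reachable (hadj : (Gb b).toSimpleGraph.Adj _ _))
      · -- v = 2m+1, m ≥ 1
        have hveq : v = 2 * m + 1 := by omega
        subst hveq
        have hadj : adjB b (2 * (m-1) + 1) (2 * m + 1) = true :=
          (adjB_iff _ _ _).mpr (Or.inr (Or.inl ⟨m - 1, Or.inl ⟨rfl, by omega⟩⟩))
        exact (ih (2 * (m-1) + 1) (by omega)).trans (SimpleGraph.Adj.reachable (hadj : (Gb b).toSimpleGraph.Adj _ _))

lemma Gb_connected (b : ℕ → Bool) : (Gb b).Connected :=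
  ⟨⟨0, rfl⟩, fun u v _ _ => (Gb_reach0 b u).symm.trans (Gb_reach0 b v)⟩

/-! ### Counting infinite components -/

open SimpleGraph

lemma ncard_le_two_of_subset_pair {α : Type*} {s : Set α} {a b : α}
    (h : s ⊆ {a, b}) : s.ncard ≤ 2 := by
  calc s.ncard ≤ ({a, b} : Set α).ncard :=
        Set.ncard_le_ncard h ((Set.finite_singleton b).insert a)
    _ ≤ ({b} : Set α).ncard + 1 := Set.ncard_insert_le a {b}
    _ = 2 := by rw [Set.ncard_singleton]

lemma comps_eq_two_of (H : SimpleGraph ℕ) (r₁ r₂ : ℕ → ℕ) (N : ℕ)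
    (inj₁ : Function.Injective r₁) (inj₂ : Function.Injective r₂)
    (h₁ : ∀ k, N ≤ k → H.Adj (r₁ k) (r₁ (k + 1)))
    (h₂ : ∀ k, N ≤ k → H.Adj (r₂ k) (r₂ (k + 1)))
    (hcov : ∀ v : ℕ, (∃ k, r₁ k = v) ∨ (∃ k, r₂ k = v))
    (hne : H.connectedComponentMk (r₁ N) ≠ H.connectedComponentMk (r₂ N)) :
    {C : H.ConnectedComponent | C.supp.Infinite}.ncard = 2 := by
  have heq : {C : H.ConnectedComponent | C.supp.Infinite} =
      {H.connectedComponentMk (r₁ N), H.connectedComponentMk (r₂ N)} := by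
    apply Set.Subset.antisymm
    · exact infinite_comps_subset H r₁ r₂ N h₁ h₂ hcov
    · rintro C (rfl | rfl)
      · exact tail_supp_infinite H r₁ inj₁ N h₁
      · exact tail_supp_infinite H r₂ inj₂ N h₂
  rw [heq, Set.ncard_pair hne]

lemma comps_eq_one_of (H : SimpleGraph ℕ) (r₁ r₂ : ℕ → ℕ) (N : ℕ)
    (inj₁ : Function.Injective r₁)
    (h₁ : ∀ k, N ≤ k → H.Adj (r₁ k) (r₁ (k + 1)))
    (h₂ : ∀ k, N ≤ k → H.Adj (r₂ k) (r₂ (k + 1)))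
    (hcov : ∀ v : ℕ, (∃ k, r₁ k = v) ∨ (∃ k, r₂ k = v))
    (heqc : H.connectedComponentMk (r₁ N) = H.connectedComponentMk (r₂ N)) :
    {C : H.ConnectedComponent | C.supp.Infinite}.ncard = 1 := by
  have heq : {C : H.ConnectedComponent | C.supp.Infinite} =
      {H.connectedComponentMk (r₁ N)} := by
    apply Set.Subset.antisymm
    · intro C hC
      rcases infinite_comps_subset H r₁ r₂ N h₁ h₂ hcov hC with h | h
      · exact h
      · rw [Set.mem_singleton_iff, h, heqc]
    · rintro C rfl
      exact tail_supp_infinite H r₁ inj₁ N h₁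
  rw [heq, Set.ncard_singleton]

/-! ### Specializing to `Gb` -/

/-- A bound on all coordinates of a finite edge list. -/
def listBound (E : List (ℕ × ℕ)) : ℕ := E.foldr (fun p m => max (max p.1 p.2) m) 0

lemma le_listBound {E : List (ℕ × ℕ)} {p : ℕ × ℕ} (h : p ∈ E) :
    p.1 ≤ listBound E ∧ p.2 ≤ listBound E := by
  induction E with
  | nil => cases h
  | cons q E ih =>
    rcases List.mem_cons.mp h with rfl | h
    · simp only [listBound, List.foldr_cons]
      refine ⟨?_, ?_⟩ <;> omega
    · have := ih h
      simp only [listBound, List.foldr_cons] at this ⊢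
      refine ⟨?_, ?_⟩ <;> omega

section FixedB

variable {b : ℕ → Bool} (hb : ∀ {k k'}, b k = true → b k' = true → k = k')

include hb in
/-- There always is a sufficiently large "safe" index `N`. -/
lemma exists_safe_N (E : List (ℕ × ℕ)) (n₀ : ℕ) :
    ∃ N, n₀ ≤ N ∧ 1 ≤ N ∧ listBound E < 2 * N ∧ ∀ k, N ≤ k → b k = false := by
  by_cases h : ∃ t, b t = true
  · obtain ⟨t, ht⟩ := h
    refine ⟨max (max (listBound E + 1) (t + 1)) (max n₀ 1), by omega, by omega, by omega,
      fun k hk => bool_to_false fun hbk => by have := hb hbk ht; omega⟩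
  · refine ⟨max (listBound E + 1) (max n₀ 1), by omega, by omega, by omega, fun k _ => ?_⟩
    exact bool_to_false fun hk => h ⟨k, hk⟩

lemma del_adj_iff (E : List (ℕ × ℕ)) (u v : ℕ) :
    ((Gb b).deleteEdges E).Adj u v ↔ adjB b u v = true ∧ (u, v) ∉ E ∧ (v, u) ∉ E :=
  Iff.rfl

lemma ray_odd_adj {E : List (ℕ × ℕ)} {N : ℕ} (hN : listBound E < 2 * N) :
    ∀ k, N ≤ k → ((Gb b).deleteEdges E).Adj (2 * k + 1) (2 * (k + 1) + 1) := by
  intro k hk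
  refine ⟨(adjB_iff _ _ _).mpr (Or.inr (Or.inl ⟨k, Or.inl ⟨rfl, by ring⟩⟩)), ?_, ?_⟩
  · intro hmem; have := le_listBound hmem; simp at this; omega
  · intro hmem; have := le_listBound hmem; simp at this; omega

lemma ray_even_adj {E : List (ℕ × ℕ)} {N : ℕ} (hN : listBound E < 2 * N)
    (hbN : ∀ k, N ≤ k → b k = false) :
    ∀ k, N ≤ k → ((Gb b).deleteEdges E).Adj (2 * k) (2 * (k + 1)) := by
  intro k hk
  refine ⟨(adjB_iff _ _ _).mpr (Or.inr (Or.inr (Or.inl ⟨k, hbN k hk,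
    Or.inl ⟨rfl, by ring⟩⟩))), ?_, ?_⟩
  · intro hmem; have := le_listBound hmem; simp at this; omega
  · intro hmem; have := le_listBound hmem; simp at this; omega

lemma cover_parity : ∀ v : ℕ, (∃ k, 2 * k + 1 = v) ∨ (∃ k, 2 * k = v) := by
  intro v; rcases Nat.even_or_odd v with ⟨m, hm⟩ | ⟨m, hm⟩
  · right; exact ⟨m, by omega⟩
  · left; exact ⟨m, by omega⟩

lemma inj_odd : Function.Injective (fun k => 2 * k + 1) := by
  intro a b h
  have h2 : 2 * a + 1 = 2 * b + 1 := h
  omega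
lemma inj_even : Function.Injective (fun k => 2 * k) := by
  intro a b h
  have h2 : 2 * a = 2 * b := h
  omega

include hb in
lemma comp_le_two (E : List (ℕ × ℕ)) : (Gb b).comp E ≤ 2 := by
  obtain ⟨N, _, hN1, hNE, hbN⟩ := exists_safe_N hb E 0
  exact ncard_le_two_of_subset_pair
    (infinite_comps_subset ((Gb b).deleteEdges E) (fun k => 2 * k + 1) (fun k => 2 * k) N
      (ray_odd_adj hNE) (ray_even_adj hNE hbN) cover_parity)

/-- Case of no flag: deleting `{0,1}` leaves two infinite components. -/
lemma comp_01_eq_two (hall : ∀ k, b k = false) : (Gb b).comp [(0, 1)] = 2 := by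
  obtain ⟨N, _, hN1, hNE, hbN⟩ := exists_safe_N (b := b)
    (fun h h' => by rw [hall] at h; exact Bool.noConfusion h) [(0, 1)] 0
  apply comps_eq_two_of _ _ _ N inj_odd inj_even (ray_odd_adj hNE)
    (ray_even_adj hNE hbN) cover_parity
  apply side_separates _ (fun v => decide (v % 2 = 0))
  · intro u v huv
    obtain ⟨hadj, h1, h2⟩ := huv
    replace hadj : adjB b u v = true := hadj
    rw [adjB_iff] at hadj
    rcases hadj with (⟨rfl, rfl⟩ | ⟨rfl, rfl⟩) | ⟨k, (⟨rfl, rfl⟩ | ⟨rfl, rfl⟩)⟩ |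
        ⟨k, hk, (⟨rfl, rfl⟩ | ⟨rfl, rfl⟩)⟩ | ⟨k, hk, (⟨rfl, rfl⟩ | ⟨rfl, rfl⟩)⟩
    · exact absurd (List.mem_singleton.mpr rfl) h1
    · exact absurd (List.mem_singleton.mpr rfl) h2
    · exact decide_eq_decide.mpr (by omega)
    · exact decide_eq_decide.mpr (by omega)
    · exact decide_eq_decide.mpr (by omega)
    · exact decide_eq_decide.mpr (by omega)
    · rw [hall k] at hk; exact Bool.noConfusion hk
    · rw [hall k] at hk; exact Bool.noConfusion hk
  · refine fun h => ?_
    have h1 : decide ((2 * N + 1) % 2 = 0) = false := by simp <;> omega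
    have h2 : decide ((2 * N) % 2 = 0) = true := by simp <;> omega
    rw [h1, h2] at h; exact Bool.noConfusion h

include hb in
/-- With a flag at `t` and all of `E` below `2t+1`, everything high is one component. -/
lemma high_comps_eq_one {t : ℕ} (ht : b t = true) (E : List (ℕ × ℕ))
    (hE : ∀ p ∈ E, min p.1 p.2 ≤ 2 * t) :
    {C : ((Gb b).deleteEdges E).ConnectedComponent | C.supp.Infinite}.ncard = 1 := by
  obtain ⟨N, hNt, hN1, hNE, hbN⟩ := exists_safe_N hb E (t + 1)
  apply comps_eq_one_of _ _ (fun k => 2 * k) N inj_odd (ray_odd_adj hNE)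
    (ray_even_adj hNE hbN) cover_parity
  -- reach from 2N+1 down to 2t+1, across to 2t+2, and up to 2N
  have hodd : ((Gb b).deleteEdges E).Reachable (2 * t + 1) (2 * N + 1) :=
    chain_reachable _ (fun k => 2 * k + 1) t N (by omega) (fun k hk _ => by
      refine ⟨(adjB_iff _ _ _).mpr (Or.inr (Or.inl ⟨k, Or.inl ⟨rfl, by ring⟩⟩)), ?_, ?_⟩
      · intro hmem; have := hE _ hmem; simp only [] at this; omega
      · intro hmem; have := hE _ hmem; simp only [] at this; omega)
  have hcross : ((Gb b).deleteEdges E).Adj (2 * t + 1) (2 * (t + 1)) := by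
    refine ⟨(adjB_iff _ _ _).mpr (Or.inr (Or.inr (Or.inr ⟨t, ht,
      Or.inl ⟨rfl, by ring⟩⟩))), ?_, ?_⟩
    · intro hmem; have := hE _ hmem; simp only [] at this; omega
    · intro hmem; have := hE _ hmem; simp only [] at this; omega
  have heven : ((Gb b).deleteEdges E).Reachable (2 * (t + 1)) (2 * N) :=
    chain_reachable _ (fun k => 2 * k) (t + 1) N (by omega) (fun k hk _ => by
      refine ⟨(adjB_iff _ _ _).mpr (Or.inr (Or.inr (Or.inl ⟨k, ?_, Or.inl ⟨rfl, by ring⟩⟩))),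
        ?_, ?_⟩
      · exact bool_to_false fun hbk => by have := hb hbk ht; omega
      · intro hmem; have := hE _ hmem; simp only [] at this; omega
      · intro hmem; have := hE _ hmem; simp only [] at this; omega)
  exact ConnectedComponent.sound (hodd.symm.trans (hcross.reachable.trans heven))

include hb in
lemma comp_01_eq_one {t : ℕ} (ht : b t = true) : (Gb b).comp [(0, 1)] = 1 :=
  high_comps_eq_one hb ht [(0, 1)] (by
    intro p hp
    simp only [List.mem_singleton] at hp
    subst hp
    simp)

include hb in
/-- With a flag at `t`, deleting the edge `{2t+1, 2t+2}` gives two infinite components. -/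
lemma comp_cut_eq_two {t : ℕ} (ht : b t = true) :
    (Gb b).comp [(2 * t + 1, 2 * t + 2)] = 2 := by
  obtain ⟨N, hNt, hN1, hNE, hbN⟩ := exists_safe_N hb [(2 * t + 1, 2 * t + 2)] (t + 1)
  apply comps_eq_two_of _ _ _ N inj_odd inj_even (ray_odd_adj hNE)
    (ray_even_adj hNE hbN) cover_parity
  apply side_separates _ (fun v => decide (v % 2 = 0 ∧ 2 * t + 2 ≤ v))
  · intro u v huv
    obtain ⟨hadj, h1, h2⟩ := huv
    replace hadj : adjB b u v = true := hadj
    rw [adjB_iff] at hadj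
    rcases hadj with (⟨rfl, rfl⟩ | ⟨rfl, rfl⟩) | ⟨k, (⟨rfl, rfl⟩ | ⟨rfl, rfl⟩)⟩ |
        ⟨k, hk, (⟨rfl, rfl⟩ | ⟨rfl, rfl⟩)⟩ | ⟨k, hk, (⟨rfl, rfl⟩ | ⟨rfl, rfl⟩)⟩
    · exact decide_eq_decide.mpr (by omega)
    · exact decide_eq_decide.mpr (by omega)
    · exact decide_eq_decide.mpr (by omega)
    · exact decide_eq_decide.mpr (by omega)
    · -- even edge (2k, 2k+2), b k = false so k ≠ t
      have hkt : k ≠ t := fun h => by rw [h, ht] at hk; exact Bool.noConfusion hk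
      exact decide_eq_decide.mpr (by omega)
    · have hkt : k ≠ t := fun h => by rw [h, ht] at hk; exact Bool.noConfusion hk
      exact decide_eq_decide.mpr (by omega)
    · -- mixed edge (2k+1, 2k+2): b k = true so k = t, but that edge is deleted
      have hkt : k = t := hb hk ht
      subst hkt
      exact absurd (List.mem_singleton.mpr rfl) h1
    · have hkt : k = t := hb hk ht
      subst hkt
      exact absurd (List.mem_singleton.mpr rfl) h2
  · refine fun h => ?_
    have h1 : decide ((2 * N + 1) % 2 = 0 ∧ 2 * t + 2 ≤ 2 * N + 1) = false := by
      simp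
    have h2 : decide ((2 * N) % 2 = 0 ∧ 2 * t + 2 ≤ 2 * N) = true := by
      simp <;> omega
    rw [h1, h2] at h; exact Bool.noConfusion h

include hb in
/-- With a flag at `t`, a separating set must have a coordinate at least `2t+1`. -/
lemma sep_high {t : ℕ} (ht : b t = true) {E : List (ℕ × ℕ)}
    (hsep : 2 ≤ (Gb b).comp E) : 2 * t + 1 ≤ listBound E := by
  by_contra h
  have h1 := high_comps_eq_one hb ht E (fun p hp => by
    have := le_listBound hp
    omega)
  rw [CGraph.comp, h1] at hsep
  omega

include hb in
lemma numEnds_Gb : (Gb b).numEnds = 2 := by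
  have hub : ∀ E : List (ℕ × ℕ), ((Gb b).comp E : ℕ∞) ≤ 2 := by
    intro E
    exact_mod_cast Nat.cast_le.mpr (comp_le_two hb E)
  apply le_antisymm
  · exact iSup_le hub
  · by_cases h : ∃ t, b t = true
    · obtain ⟨t, ht⟩ := h
      have h2 := comp_cut_eq_two hb ht
      calc (2 : ℕ∞) = ((Gb b).comp [(2 * t + 1, 2 * t + 2)] : ℕ∞) := by
            exact_mod_cast h2.symm
        _ ≤ (Gb b).numEnds := le_iSup (fun E => ((Gb b).comp E : ℕ∞)) _
    · have hall : ∀ k, b k = false := fun k => bool_to_false fun hk => h ⟨k, hk⟩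
      have h2 := comp_01_eq_two (b := b) hall
      calc (2 : ℕ∞) = ((Gb b).comp [(0, 1)] : ℕ∞) := by exact_mod_cast h2.symm
        _ ≤ (Gb b).numEnds := le_iSup (fun E => ((Gb b).comp E : ℕ∞)) _

end FixedB

/-! ### The halting flags -/

open Nat.Partrec (Code)
open Nat.Partrec.Code

/-- `e`-th machine halts on input `e` within `k` steps. -/
def haltB (e k : ℕ) : Bool := (evaln k (Denumerable.ofNat Code e) e).isSome

/-- `e`-th machine halts on input `e` in exactly `k+1` (but not `k`) steps. -/
def nhF (e k : ℕ) : Bool := haltB e (k + 1) && !haltB e k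

lemma haltB_mono {e k k' : ℕ} (h : k ≤ k') (hk : haltB e k = true) : haltB e k' = true := by
  rw [haltB, Option.isSome_iff_exists] at hk ⊢
  obtain ⟨x, hx⟩ := hk
  exact ⟨x, evaln_mono h hx⟩

lemma nhF_unique {e k k' : ℕ} (h : nhF e k = true) (h' : nhF e k' = true) : k = k' := by
  rw [nhF, Bool.and_eq_true, Bool.not_eq_true'] at h h'
  by_contra hne
  rcases Nat.lt_or_ge k k' with hlt | hge
  · have := haltB_mono (show k + 1 ≤ k' by omega) h.1
    rw [this] at h'; exact Bool.noConfusion h'.2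
  · have hlt : k' < k := by omega
    have := haltB_mono (show k' + 1 ≤ k by omega) h'.1
    rw [this] at h; exact Bool.noConfusion h.2

lemma K0_iff_haltB (e : ℕ) : e ∈ K₀ ↔ ∃ k, haltB e k = true := by
  rw [K₀, Set.mem_setOf_eq, evalIdx, Part.dom_iff_mem]
  constructor
  · rintro ⟨x, hx⟩
    obtain ⟨k, hk⟩ := evaln_complete.mp hx
    exact ⟨k, Option.isSome_iff_exists.mpr ⟨x, hk⟩⟩
  · rintro ⟨k, hk⟩
    obtain ⟨x, hx⟩ := Option.isSome_iff_exists.mp hk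
    exact ⟨x, evaln_sound hx⟩

lemma K0_iff_nhF (e : ℕ) : e ∈ K₀ ↔ ∃ k, nhF e k = true := by
  rw [K0_iff_haltB]
  constructor
  · rintro ⟨k, hk⟩
    have h0 : haltB e 0 = false := by simp [haltB, evaln]
    have hex : ∃ m, haltB e m = true := ⟨k, hk⟩
    classical
    set m := Nat.find hex with hm
    have hm1 : haltB e m = true := Nat.find_spec hex
    have hmpos : 1 ≤ m := by
      rcases Nat.eq_zero_or_pos m with h | h
      · rw [h, h0] at hm1; exact Bool.noConfusion hm1
      · exact h
    refine ⟨m - 1, ?_⟩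
    rw [nhF, Bool.and_eq_true, Bool.not_eq_true']
    constructor
    · rw [show m - 1 + 1 = m by omega]; exact hm1
    · by_contra h'
      have : haltB e (m - 1) = true := by
        cases hh : haltB e (m - 1)
        · exact absurd hh h'
        · rfl
      exact absurd (Nat.find_min hex (show m - 1 < m by omega)) (fun hc => hc this)
  · rintro ⟨k, hk⟩
    rw [nhF, Bool.and_eq_true] at hk
    exact ⟨k + 1, hk.1⟩

/-- The sequence of graphs. -/
def GsF : ℕ → CGraph := fun e => Gb (nhF e)

lemma nhF_hb (e : ℕ) : ∀ {k k'}, nhF e k = true → nhF e k' = true → k = k' :=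
  fun h h' => nhF_unique h h'

lemma sep01_iff (e : ℕ) : [((0 : ℕ), (1 : ℕ))] ∈ (GsF e).Sep ↔ e ∉ K₀ := by
  rw [CGraph.Sep, Set.mem_setOf_eq]
  constructor
  · intro h he
    obtain ⟨t, ht⟩ := (K0_iff_nhF e).mp he
    have h2 := comp_01_eq_one (nhF_hb e) ht
    simp only [GsF] at h
    rw [h2] at h
    omega
  · intro he
    have hall : ∀ k, nhF e k = false := by
      intro k
      cases hh : nhF e k
      · rfl
      · exact absurd ((K0_iff_nhF e).mpr ⟨k, hh⟩) he
    have := comp_01_eq_two (b := nhF e) hall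
    simp only [GsF]
    omega

/-! ### Computability of the graph sequence -/

lemma haltB_primrec : Primrec₂ haltB := by
  have h1 : Primrec fun p : ℕ × ℕ => ((p.2, (Denumerable.ofNat Code p.1 : Code)), p.1) :=
    (Primrec.snd.pair ((Primrec.ofNat Code).comp Primrec.fst)).pair Primrec.fst
  have h2 := (Nat.Partrec.Code.primrec_evaln).comp h1
  exact Primrec.option_isSome.comp h2

lemma nhF_primrec : Primrec₂ nhF := by
  have h1 : Primrec fun p : ℕ × ℕ => haltB p.1 (p.2 + 1) :=
    haltB_primrec.comp Primrec.fst (Primrec.succ.comp Primrec.snd)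
  have h2 : Primrec fun p : ℕ × ℕ => !(haltB p.1 p.2) :=
    Primrec.not.comp (haltB_primrec.comp Primrec.fst Primrec.snd)
  exact Primrec.and.comp h1 h2

section AdjPrim

lemma adjB_nhF_primrec :
    Primrec fun p : ℕ × ℕ × ℕ => adjB (nhF p.1) p.2.1 p.2.2 := by
  have hu : Primrec fun p : ℕ × ℕ × ℕ => p.2.1 := Primrec.fst.comp Primrec.snd
  have hv : Primrec fun p : ℕ × ℕ × ℕ => p.2.2 := Primrec.snd.comp Primrec.snd
  have hmn : Primrec fun p : ℕ × ℕ × ℕ => min p.2.1 p.2.2 := Primrec.nat_min.comp hu hv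
  have hmx : Primrec fun p : ℕ × ℕ × ℕ => max p.2.1 p.2.2 := Primrec.nat_max.comp hu hv
  have hd1 : Primrec fun p : ℕ × ℕ × ℕ =>
      decide (min p.2.1 p.2.2 = 0 ∧ max p.2.1 p.2.2 = 1) :=
    (PrimrecPred.and (Primrec.eq.comp hmn (Primrec.const 0))
      (Primrec.eq.comp hmx (Primrec.const 1))).decide
  have hmn2 : Primrec fun p : ℕ × ℕ × ℕ => min p.2.1 p.2.2 + 2 :=
    Primrec.nat_add.comp hmn (Primrec.const 2)
  have hmn1 : Primrec fun p : ℕ × ℕ × ℕ => min p.2.1 p.2.2 + 1 :=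
    Primrec.nat_add.comp hmn (Primrec.const 1)
  have hmod : Primrec fun p : ℕ × ℕ × ℕ => min p.2.1 p.2.2 % 2 :=
    Primrec.nat_mod.comp hmn (Primrec.const 2)
  have hd2 : Primrec fun p : ℕ × ℕ × ℕ =>
      decide (max p.2.1 p.2.2 = min p.2.1 p.2.2 + 2 ∧ min p.2.1 p.2.2 % 2 = 1) :=
    (PrimrecPred.and (Primrec.eq.comp hmx hmn2) (Primrec.eq.comp hmod (Primrec.const 1))).decide
  have hd3 : Primrec fun p : ℕ × ℕ × ℕ =>
      decide (max p.2.1 p.2.2 = min p.2.1 p.2.2 + 2 ∧ min p.2.1 p.2.2 % 2 = 0) :=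
    (PrimrecPred.and (Primrec.eq.comp hmx hmn2) (Primrec.eq.comp hmod (Primrec.const 0))).decide
  have hd4 : Primrec fun p : ℕ × ℕ × ℕ =>
      decide (max p.2.1 p.2.2 = min p.2.1 p.2.2 + 1 ∧ min p.2.1 p.2.2 % 2 = 1) :=
    (PrimrecPred.and (Primrec.eq.comp hmx hmn1) (Primrec.eq.comp hmod (Primrec.const 1))).decide
  have hnh : Primrec fun p : ℕ × ℕ × ℕ => nhF p.1 (min p.2.1 p.2.2 / 2) :=
    nhF_primrec.comp Primrec.fst (Primrec.nat_div.comp hmn (Primrec.const 2))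
  have hnot : Primrec fun p : ℕ × ℕ × ℕ => !(nhF p.1 (min p.2.1 p.2.2 / 2)) :=
    Primrec.not.comp hnh
  exact Primrec.or.comp (Primrec.or.comp (Primrec.or.comp hd1 hd2)
    (Primrec.and.comp hd3 hnot)) (Primrec.and.comp hd4 hnh)

end AdjPrim

lemma degB_nhF_primrec : Primrec₂ fun e v => degB (nhF e) v := by
  have hv : Primrec fun p : ℕ × ℕ => p.2 := Primrec.snd
  have hnh2 : Primrec fun p : ℕ × ℕ => nhF p.1 (p.2 / 2) :=
    nhF_primrec.comp Primrec.fst (Primrec.nat_div.comp hv (Primrec.const 2))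
  have hnh0 : Primrec fun p : ℕ × ℕ => nhF p.1 0 :=
    nhF_primrec.comp Primrec.fst (Primrec.const 0)
  have hb0 : PrimrecPred fun p : ℕ × ℕ => nhF p.1 0 = true :=
    Primrec.eq.comp hnh0 (Primrec.const true)
  have hb2 : PrimrecPred fun p : ℕ × ℕ => nhF p.1 (p.2 / 2) = true :=
    Primrec.eq.comp hnh2 (Primrec.const true)
  have hz : PrimrecPred fun p : ℕ × ℕ => p.2 = 0 :=
    Primrec.eq.comp hv (Primrec.const 0)
  have hodd : PrimrecPred fun p : ℕ × ℕ => p.2 % 2 = 1 :=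
    Primrec.eq.comp (Primrec.nat_mod.comp hv (Primrec.const 2)) (Primrec.const 1)
  exact Primrec.ite hz
    (Primrec.ite hb0 (Primrec.const 1) (Primrec.const 2))
    (Primrec.ite hodd
      (Primrec.ite hb2 (Primrec.const 3) (Primrec.const 2))
      (Primrec.ite hb2 (Primrec.const 1) (Primrec.const 2)))

lemma GsF_uniformlyHC : UniformlyHC GsF := by
  refine ⟨?_, ?_, ?_, ?_⟩
  · exact Computable.const true
  · exact (adjB_nhF_primrec).to_comp
  · intro e v
    exact neighborSet_finite (nhF e) v
  · exact ⟨fun e v => degB (nhF e) v, degB_nhF_primrec.to_comp,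
      fun e v => degree_Gb (nhF e) v⟩

/-! ### `Π⁰₁`-completeness -/

lemma CE_K0 : CE K₀ := by
  refine ⟨fun e => evalIdx e e, ?_, fun n => Iff.rfl⟩
  have : Partrec fun e : ℕ => Nat.Partrec.Code.eval (Denumerable.ofNat Code e) e :=
    Nat.Partrec.Code.eval_part.comp ((Computable.ofNat Code).comp Computable.id) Computable.id
  exact this

/-- Reduction of any c.e. set to `K₀`. -/
lemma ce_reduces_K0 {B : Set ℕ} (hB : CE B) : ManyOneReducible (· ∈ B) (· ∈ K₀) := by
  obtain ⟨f, hf, hiff⟩ := hB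
  have hf' : Partrec fun n : ℕ => f n.unpair.1 :=
    hf.comp (Primrec.to_comp (Primrec.fst.comp Primrec.unpair))
  obtain ⟨c, hc⟩ := Nat.Partrec.Code.exists_code.mp (Partrec.nat_iff.mp hf')
  refine ⟨fun n => Encodable.encode (Nat.Partrec.Code.curry c n), ?_, ?_⟩
  · exact (Primrec.encode.comp
      (Nat.Partrec.Code.primrec₂_curry.comp (Primrec.const c) Primrec.id)).to_comp
  · intro n
    show n ∈ B ↔ Encodable.encode (Nat.Partrec.Code.curry c n) ∈ K₀
    have hev : evalIdx (Encodable.encode (Nat.Partrec.Code.curry c n))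
        (Encodable.encode (Nat.Partrec.Code.curry c n)) = f n := by
      rw [evalIdx, Denumerable.ofNat_encode, Nat.Partrec.Code.eval_curry, hc]
      simp
    rw [K₀, Set.mem_setOf_eq, hev, hiff]

lemma pi1_complete_sep : Pi1Complete {e | [((0 : ℕ), (1 : ℕ))] ∈ (GsF e).Sep} := by
  constructor
  · -- the complement is K₀, which is c.e.
    obtain ⟨f, hf, hiff⟩ := CE_K0
    refine ⟨f, hf, fun n => ?_⟩
    rw [← hiff]
    simp only [Set.mem_compl_iff, Set.mem_setOf_eq, sep01_iff, not_not]
  · intro B hB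
    obtain ⟨g, hg, hgiff⟩ := ce_reduces_K0 hB
    refine ⟨g, hg, fun n => ?_⟩
    show n ∈ B ↔ g n ∈ {e | [((0 : ℕ), (1 : ℕ))] ∈ (GsF e).Sep}
    rw [Set.mem_setOf_eq, sep01_iff]
    constructor
    · intro hn hK
      exact (hgiff n).mpr hK hn
    · intro h
      by_contra hn
      exact h ((hgiff n).mp hn)

/-! ### Relativized computability of ordinary partial recursive functions -/

lemma recIn_of_natPartrec (O : ℕ →. ℕ) {f : ℕ →. ℕ} (h : Nat.Partrec f) : RecIn O f := by
  induction h with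
  | zero => exact ⟨.zero, rfl⟩
  | succ => exact ⟨.succ, rfl⟩
  | left => exact ⟨.left, rfl⟩
  | right => exact ⟨.right, rfl⟩
  | pair hf hg ihf ihg =>
    obtain ⟨cf, hcf⟩ := ihf
    obtain ⟨cg, hcg⟩ := ihg
    exact ⟨.pair cf cg, by simp only [OCode.eval, hcf, hcg]; rfl⟩
  | comp hf hg ihf ihg =>
    obtain ⟨cf, hcf⟩ := ihf
    obtain ⟨cg, hcg⟩ := ihg
    exact ⟨.comp cf cg, by simp only [OCode.eval, hcf, hcg]; rfl⟩
  | prec hf hg ihf ihg =>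
    obtain ⟨cf, hcf⟩ := ihf
    obtain ⟨cg, hcg⟩ := ihg
    exact ⟨.prec cf cg, by simp only [OCode.eval, hcf, hcg]; rfl⟩
  | rfind hf ihf =>
    obtain ⟨cf, hcf⟩ := ihf
    exact ⟨.rfind cf, by simp only [OCode.eval, hcf]; rfl⟩

lemma recIn_of_computable (O : ℕ →. ℕ) {f : ℕ → ℕ} (h : Computable f) :
    RecIn O (fun n => Part.some (f n)) :=
  recIn_of_natPartrec O (Partrec.nat_iff.mp h.partrec)

/-! ### Computing the halting problem from separators -/

/-- The post-processing function of the oracle reduction. -/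
def postF : ℕ → ℕ := fun p =>
  if haltB p.unpair.1
      (listBound ((Encodable.decode (α := List (ℕ × ℕ)) p.unpair.2).getD []) + 1) = true
  then 1 else 0

lemma listBound_primrec : Primrec listBound := by
  have hh : Primrec₂ fun (_ : List (ℕ × ℕ)) (bs : (ℕ × ℕ) × ℕ) =>
      max (max bs.1.1 bs.1.2) bs.2 :=
    Primrec.nat_max.comp
      (Primrec.nat_max.comp (Primrec.fst.comp (Primrec.fst.comp Primrec.snd))
        (Primrec.snd.comp (Primrec.fst.comp Primrec.snd)))
      (Primrec.snd.comp Primrec.snd)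
  exact Primrec.list_foldr Primrec.id (Primrec.const 0) hh

lemma postF_computable : Computable postF := by
  have h1 : Primrec fun p : ℕ => p.unpair.1 := Primrec.fst.comp Primrec.unpair
  have h2 : Primrec fun p : ℕ => p.unpair.2 := Primrec.snd.comp Primrec.unpair
  have hdec : Primrec fun p : ℕ =>
      (Encodable.decode (α := List (ℕ × ℕ)) p.unpair.2).getD [] :=
    Primrec.option_getD.comp (Primrec.decode.comp h2) (Primrec.const [])
  have hlb : Primrec fun p : ℕ =>
      listBound ((Encodable.decode (α := List (ℕ × ℕ)) p.unpair.2).getD []) + 1 :=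
    Primrec.nat_add.comp (listBound_primrec.comp hdec) (Primrec.const 1)
  have hcond : PrimrecPred fun p : ℕ =>
      haltB p.unpair.1
        (listBound ((Encodable.decode (α := List (ℕ × ℕ)) p.unpair.2).getD []) + 1) = true :=
    Primrec.eq.comp (haltB_primrec.comp h1 hlb) (Primrec.const true)
  exact (Primrec.ite hcond (Primrec.const 1) (Primrec.const 0)).to_comp

lemma sep_computes_K0 (f : ℕ → List (ℕ × ℕ)) (hf : ∀ e, f e ∈ (GsF e).Sep) :
    RecIn (fun n => Part.some (Encodable.encode (f n))) (chi K₀) := by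
  set O : ℕ →. ℕ := fun n => Part.some (Encodable.encode (f n)) with hO
  obtain ⟨cF, hcF⟩ := recIn_of_computable O postF_computable
  obtain ⟨cid, hcid⟩ := recIn_of_computable O Computable.id
  refine ⟨.comp cF (.pair cid .oracle), funext fun n => ?_⟩
  have hval : (OCode.pair cid OCode.oracle).eval O n =
      Part.some (Nat.pair n (Encodable.encode (f n))) := by
    show (Nat.pair <$> cid.eval O n <*> OCode.eval O .oracle n) = _
    rw [hcid]
    simp [OCode.eval, hO, Seq.seq]
  show ((OCode.pair cid OCode.oracle).eval O n) >>= cF.eval O = chi K₀ n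
  rw [hval]
  have hstep : (Part.some (Nat.pair n (Encodable.encode (f n)))) >>= cF.eval O
      = Part.some (postF (Nat.pair n (Encodable.encode (f n)))) := by
    rw [hcF]
    simp [Part.bind_eq_bind, Part.bind_some]
  rw [hstep]
  -- now compute the value of postF
  have hkey : postF (Nat.pair n (Encodable.encode (f n))) =
      K₀.indicator (fun _ => 1) n := by
    rw [postF]
    simp only [Nat.unpair_pair, Encodable.encodek, Option.getD_some]
    by_cases hK : n ∈ K₀
    · rw [Set.indicator_of_mem hK]
      rw [if_pos ?_]
      obtain ⟨t, ht⟩ := (K0_iff_nhF n).mp hK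
      have hsep : 2 ≤ (Gb (nhF n)).comp (f n) := hf n
      have hhigh := sep_high (nhF_hb n) ht hsep
      have hht : haltB n (t + 1) = true := by
        rw [nhF, Bool.and_eq_true] at ht
        exact ht.1
      exact haltB_mono (by omega) hht
    · rw [Set.indicator_of_notMem hK]
      rw [if_neg ?_]
      intro hhalt
      exact hK ((K0_iff_haltB n).mpr ⟨_, hhalt⟩)
  rw [hkey]
  rfl


/-- There is a uniformly highly computable sequence of graphs, each a tree with
exactly two ends, such that (1) `{e : [(0,1)] ∈ Sep(G_e)}` is `Π⁰₁`-complete, and (2) every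
function choosing a witness of separation `f(e) ∈ Sep(G_e)` computes the halting set. -/
theorem stmt_14 :
    ∃ Gs : ℕ → CGraph, UniformlyHC Gs ∧
      (∀ e, (Gs e).Connected ∧ (Gs e).toSimpleGraph.IsAcyclic ∧ (Gs e).numEnds = 2) ∧
      Pi1Complete {e | [((0 : ℕ), (1 : ℕ))] ∈ (Gs e).Sep} ∧
      (∀ f : ℕ → List (ℕ × ℕ), (∀ e, f e ∈ (Gs e).Sep) →
        RecIn (fun n => Part.some (Encodable.encode (f n))) (chi K₀)) := by
  refine ⟨GsF, GsF_uniformlyHC, ?_, pi1_complete_sep, sep_computes_K0⟩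
  intro e
  exact ⟨Gb_connected (nhF e), Gb_acyclic (nhF e), numEnds_Gb (nhF_hb e)⟩
end
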